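/- arXiv:1311.7303 — 5 statements merged into one kernel-verified Lean document; each statement's English description precedes it below -/
import Mathlib

section
/- Let K be a field, S = K[x₁,…,xₙ], and let I and J be monomial ideals of S such that I = uJ for some monomial u ∈ S and height J ≥ 2. If S/J is pretty clean, then S/I is pretty clean. -/
open MvPolynomial

variable {K : Type*} [Field K] {σ : Type*}

/-- An ideal of a polynomial ring is a *monomial ideal* if it is generated by monomials. -/
def IsMonomialIdeal (I : Ideal (MvPolynomial σ K)) : Prop :=
  ∃ G : Set (σ →₀ ℕ), I = Ideal.span ((fun d => (monomial d (1 : K))) '' G)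

/-- A *square-free monomial ideal* is an ideal generated by square-free monomials,
i.e. by monomials of the form `∏ i in s, X i` for finite sets `s` of variables. -/
def IsSquarefreeMonomialIdeal (I : Ideal (MvPolynomial σ K)) : Prop :=
  ∃ G : Set (Finset σ), I = Ideal.span ((fun s => ∏ i ∈ s, (X i : MvPolynomial σ K)) '' G)

/-- A *monomial prime ideal*: an ideal generated by a subset of the variables.
(These are exactly the monomial ideals which are prime.) -/
def IsMonomialPrime (p : Ideal (MvPolynomial σ K)) : Prop :=
  ∃ s : Set σ, p = Ideal.span ((fun i => (X i : MvPolynomial σ K)) '' s)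

/-- `S/I` is *clean* if there is a chain of monomial ideals
`I = I₀ ⊂ I₁ ⊂ ⋯ ⊂ I_r = S` with `I_i/I_{i-1} ≅ S/𝔭_i` for monomial prime ideals `𝔭_i`
which are all minimal primes of `I`. -/
def IsClean (I : Ideal (MvPolynomial σ K)) : Prop :=
  ∃ (r : ℕ) (F : Fin (r + 1) → Ideal (MvPolynomial σ K))
    (p : Fin r → Ideal (MvPolynomial σ K)),
    (∀ i, IsMonomialIdeal (F i)) ∧ F 0 = I ∧ F (Fin.last r) = ⊤ ∧
    (∀ i : Fin r, F i.castSucc < F i.succ) ∧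
    ∀ i : Fin r, IsMonomialPrime (p i) ∧ p i ∈ I.minimalPrimes ∧
      Nonempty ((↥(F i.succ) ⧸ (Submodule.comap (F i.succ).subtype (F i.castSucc)))
        ≃ₗ[MvPolynomial σ K] (MvPolynomial σ K ⧸ p i))

/-- `S/I` is *pretty clean* if there is a chain of monomial ideals
`I = I₀ ⊂ I₁ ⊂ ⋯ ⊂ I_r = S` with `I_i/I_{i-1} ≅ S/𝔭_i` for monomial prime ideals `𝔭_i`
such that `i < j` and `𝔭_i ⊆ 𝔭_j` imply `𝔭_i = 𝔭_j`. -/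
def IsPrettyClean (I : Ideal (MvPolynomial σ K)) : Prop :=
  ∃ (r : ℕ) (F : Fin (r + 1) → Ideal (MvPolynomial σ K))
    (p : Fin r → Ideal (MvPolynomial σ K)),
    (∀ i, IsMonomialIdeal (F i)) ∧ F 0 = I ∧ F (Fin.last r) = ⊤ ∧
    (∀ i : Fin r, F i.castSucc < F i.succ) ∧
    (∀ i : Fin r, IsMonomialPrime (p i) ∧
      Nonempty ((↥(F i.succ) ⧸ (Submodule.comap (F i.succ).subtype (F i.castSucc)))
        ≃ₗ[MvPolynomial σ K] (MvPolynomial σ K ⧸ p i))) ∧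
    ∀ i j : Fin r, i < j → p i ≤ p j → p i = p j

/-- The height of an ideal: the infimum of the heights of primes containing it. -/
noncomputable def idealHeight {R : Type*} [CommRing R] (I : Ideal R) : ℕ∞ :=
  sInf {h | ∃ p : PrimeSpectrum R, I ≤ p.asIdeal ∧ h = Order.height p}

/-- The minimal monomial generating set `G(I)` of a monomial ideal `I`. -/
def minimalMonomialGens (I : Ideal (MvPolynomial σ K)) : Set (MvPolynomial σ K) :=
  {f | ∃ d : σ →₀ ℕ, f = monomial d (1 : K) ∧ monomial d (1 : K) ∈ I ∧
    ∀ e : σ →₀ ℕ, e < d → monomial e (1 : K) ∉ I}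

/-- `μ(I)`, the number of elements of the minimal monomial generating set of `I`. -/
noncomputable def mu (I : Ideal (MvPolynomial σ K)) : ℕ :=
  (minimalMonomialGens I).ncard

/-- The graded maximal ideal `(x_i : i)` of the polynomial ring. -/
noncomputable def maxMonomialIdeal (K : Type*) [Field K] (σ : Type*) : Ideal (MvPolynomial σ K) :=
  Ideal.span (Set.range (X : σ → MvPolynomial σ K))

/-- The depth of `S/I` (as an `S`-module, with respect to the graded maximal ideal):
the supremum of lengths of regular sequences on `S/I` consisting of elements of the
graded maximal ideal. -/
noncomputable def quotDepth (I : Ideal (MvPolynomial σ K)) : ℕ :=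
  sSup {k | ∃ rs : List (MvPolynomial σ K), rs.length = k ∧
    (∀ a ∈ rs, a ∈ maxMonomialIdeal K σ) ∧
    RingTheory.Sequence.IsRegular (MvPolynomial σ K ⧸ I) rs}

/-- The Stanley space `u·K[Z]`, as a `K`-subspace of the polynomial ring: the `K`-span of
all monomials `X^(u+d)` where `d` is supported in `Z`. -/
noncomputable def stanleySpace (K : Type*) [Field K] {σ : Type*} (u : σ →₀ ℕ)
    (Z : Finset σ) : Submodule K (MvPolynomial σ K) :=
  Submodule.span K ((fun d => (monomial (u + d) (1 : K))) '' {d : σ →₀ ℕ | ↑d.support ⊆ (Z : Set σ)})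

/-- `S/I = ⊕_{i} u_i K[Z_i]` is a Stanley decomposition: each Stanley space embeds in `S/I`,
their images are independent, and they sum to `S/I`. -/
def IsStanleyDecomp (I : Ideal (MvPolynomial σ K)) {r : ℕ}
    (u : Fin r → (σ →₀ ℕ)) (Z : Fin r → Finset σ) : Prop :=
  (∀ i, Disjoint (stanleySpace K (u i) (Z i)) (I.restrictScalars K)) ∧
  iSupIndep (fun i => (stanleySpace K (u i) (Z i)).map
    ((Ideal.Quotient.mkₐ K I).toLinearMap.restrictScalars K)) ∧
  (⨆ i, (stanleySpace K (u i) (Z i)).map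
    ((Ideal.Quotient.mkₐ K I).toLinearMap.restrictScalars K)) = ⊤

/-- The Stanley depth of `S/I`: the supremum over all Stanley decompositions
`S/I = ⊕ u_i K[Z_i]` of `min |Z_i|`. -/
noncomputable def stanleyDepth (I : Ideal (MvPolynomial σ K)) : ℕ :=
  sSup {k | ∃ (r : ℕ) (u : Fin r → (σ →₀ ℕ)) (Z : Fin r → Finset σ),
    IsStanleyDecomp I u Z ∧ ∀ i, k ≤ (Z i).card}

/-- The Alexander dual `I^∨` of a square-free monomial ideal `I`: the ideal generated by
the monomials `∏_{i ∈ s} x_i` for which `(x_i : i ∈ s)` is a minimal prime of `I`. -/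
noncomputable def alexanderDual (I : Ideal (MvPolynomial σ K)) : Ideal (MvPolynomial σ K) :=
  Ideal.span ((fun s => ∏ i ∈ s, (X i : MvPolynomial σ K)) ''
    {s : Finset σ |
      Ideal.span ((fun i => (X i : MvPolynomial σ K)) '' (s : Set σ)) ∈ I.minimalPrimes})

/-- A monomial ideal `J` has *linear quotients* if there is an ordering `u₁, …, u_m` of its
minimal monomial generating set such that each colon ideal `(u₁,…,u_{i-1}) : u_i` is
generated by a subset of the variables. -/
def HasLinearQuotients (J : Ideal (MvPolynomial σ K)) : Prop :=
  ∃ (m : ℕ) (u : Fin m → MvPolynomial σ K), Function.Injective u ∧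
    Set.range u = minimalMonomialGens J ∧
    ∀ i : Fin m, 0 < (i : ℕ) →
      ∃ s : Set σ,
        Submodule.colon (Ideal.span (u '' {j : Fin m | (j : ℕ) < (i : ℕ)}))
            (Ideal.span {u i}) =
          Ideal.span ((fun i => (X i : MvPolynomial σ K)) '' s)
/-- A simplicial complex: a collection of finite subsets closed under taking subsets. -/
def IsSimplicialComplex (Δ : Set (Finset σ)) : Prop :=
  ∀ F ∈ Δ, ∀ G ⊆ F, G ∈ Δ

/-- The Stanley-Reisner ideal of `Δ`, generated by the square-free monomials
corresponding to non-faces of `Δ`. -/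
noncomputable def stanleyReisnerIdeal (K : Type*) [Field K] {σ : Type*} (Δ : Set (Finset σ)) :
    Ideal (MvPolynomial σ K) :=
  Ideal.span ((fun s => ∏ i ∈ s, (X i : MvPolynomial σ K)) '' {F | F ∉ Δ})

/-- A facet: a maximal face. -/
def IsFacet (Δ : Set (Finset σ)) (F : Finset σ) : Prop :=
  F ∈ Δ ∧ ∀ G ∈ Δ, F ⊆ G → F = G

/-- `Δ` is connected if any two facets can be joined by a chain of facets with
consecutive ones intersecting. -/
def IsConnectedComplex (Δ : Set (Finset σ)) : Prop :=
  ∀ F G : Finset σ, IsFacet Δ F → IsFacet Δ G →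
    ∃ (q : ℕ) (c : Fin (q + 1) → Finset σ), (∀ i, IsFacet Δ (c i)) ∧
      c 0 = F ∧ c (Fin.last q) = G ∧ ∀ i : Fin q, ∃ v, v ∈ c i.castSucc ∧ v ∈ c i.succ

/-- A homogeneous (graded) ideal of the polynomial ring with its standard grading. -/
def IsHomogeneousIdeal (p : Ideal (MvPolynomial σ K)) : Prop :=
  ∀ f ∈ p, ∀ d : ℕ, homogeneousComponent d f ∈ p

/-- `Δ` is locally complete intersection: every vertex is a face, and at every
prime `𝔭 ∈ Proj S/I_Δ` (a homogeneous prime containing `I_Δ` but not the irrelevant maximal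
ideal), the localization of `I_Δ` is generated by a regular sequence. -/
def IsLocallyCompleteIntersection (K : Type*) [Field K] {σ : Type*} (Δ : Set (Finset σ)) :
    Prop :=
  (∀ i : σ, ({i} : Finset σ) ∈ Δ) ∧
  ∀ (p : Ideal (MvPolynomial σ K)) [p.IsPrime], IsHomogeneousIdeal p →
    stanleyReisnerIdeal K Δ ≤ p → ¬ (maxMonomialIdeal K σ ≤ p) →
    ∃ rs : List (Localization p.primeCompl),
      RingTheory.Sequence.IsRegular (Localization p.primeCompl) rs ∧
      Ideal.map (algebraMap (MvPolynomial σ K) (Localization p.primeCompl))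
        (stanleyReisnerIdeal K Δ) = Ideal.span {x | x ∈ rs}


section AuxPrettyCleanLemma

variable {K : Type*} [Field K] {n : ℕ}

private lemma aux_prime_X (k : Fin n) : Prime (X k : MvPolynomial (Fin n) K) := by
  cases n with
  | zero => exact k.elim0
  | succ m =>
    rw [← MulEquiv.prime_iff (renameEquiv K (Equiv.swap k 0)).toMulEquiv]
    have h1 : (renameEquiv K (Equiv.swap k 0)).toMulEquiv (X k : MvPolynomial (Fin (m+1)) K)
        = X 0 := by
      show (renameEquiv K (Equiv.swap k 0)) (X k) = X 0
      simp [Equiv.swap_apply_left]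
    rw [h1, ← MulEquiv.prime_iff (MvPolynomial.finSuccEquiv K m).toMulEquiv]
    have h2 : (MvPolynomial.finSuccEquiv K m).toMulEquiv (X 0 : MvPolynomial (Fin (m+1)) K)
        = Polynomial.X := by
      show (MvPolynomial.finSuccEquiv K m) (X 0) = Polynomial.X
      exact finSuccEquiv_X_zero
    rw [h2]
    exact Polynomial.prime_X

private lemma aux_not_le_span_X {J : Ideal (MvPolynomial (Fin n) K)}
    (hht : 2 ≤ idealHeight J) (k : Fin n) :
    ¬ J ≤ Ideal.span {(X k : MvPolynomial (Fin n) K)} := by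
  intro hle
  have hprime := aux_prime_X (K := K) k
  have hp : (Ideal.span {(X k : MvPolynomial (Fin n) K)}).IsPrime :=
    (Ideal.span_singleton_prime hprime.ne_zero).mpr hprime
  set pt : PrimeSpectrum (MvPolynomial (Fin n) K) := ⟨_, hp⟩ with hpt
  have h2 : idealHeight J ≤ Order.height pt := sInf_le ⟨pt, hle, rfl⟩
  have hbot : ∀ q : PrimeSpectrum (MvPolynomial (Fin n) K), q < pt → q.asIdeal = ⊥ := by
    intro q hq
    have hXq : (X k : MvPolynomial (Fin n) K) ∉ q.asIdeal := by
      intro h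
      have hpq : pt ≤ q := by
        rw [← PrimeSpectrum.asIdeal_le_asIdeal]
        exact (Ideal.span_singleton_le_iff_mem _).mpr h
      exact absurd (lt_of_lt_of_le hq hpq) (lt_irrefl _)
    have hqle : q.asIdeal ≤ Ideal.span {(X k : MvPolynomial (Fin n) K)} :=
      (PrimeSpectrum.asIdeal_le_asIdeal _ _).mpr hq.le
    have hdvd : ∀ (m : ℕ) (f : MvPolynomial (Fin n) K), f ∈ q.asIdeal →
        (X k : MvPolynomial (Fin n) K) ^ m ∣ f := by
      intro m
      induction m with
      | zero => intro f _; simpa using one_dvd f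
      | succ m ih =>
        intro f hf
        obtain ⟨g, hg⟩ := Ideal.mem_span_singleton.mp (hqle hf)
        subst hg
        have hgq : g ∈ q.asIdeal := (q.isPrime.mem_or_mem hf).resolve_left hXq
        obtain ⟨h, rfl⟩ := ih g hgq
        exact ⟨h, by ring⟩
    rw [eq_bot_iff]
    intro f hf
    rw [Submodule.mem_bot]
    by_contra hf0
    obtain ⟨xi, hxi⟩ := Finset.nonempty_iff_ne_empty.mpr
      (fun h => hf0 (MvPolynomial.support_eq_empty.mp h))
    have hmem : f ∈ Ideal.span ((fun s => monomial s (1:K)) ''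
        {Finsupp.single k (f.totalDegree + 1)}) := by
      rw [Set.image_singleton, Ideal.mem_span_singleton, ← X_pow_eq_monomial]
      exact hdvd _ f hf
    obtain ⟨si, hsi, hsile⟩ := mem_ideal_span_monomial_image.mp hmem xi hxi
    rw [Set.mem_singleton_iff] at hsi
    subst hsi
    have h1 : f.totalDegree + 1 ≤ xi k := Finsupp.single_le_iff.mp hsile
    have h2' : xi k ≤ f.totalDegree := by
      have hk : xi k ≤ xi.sum fun _ e => e := by
        by_cases h : xi k = 0
        · omega
        · exact Finset.single_le_sum (f := fun a => xi a) (fun _ _ => Nat.zero_le _)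
            (Finsupp.mem_support_iff.mpr h)
      exact le_trans hk (MvPolynomial.le_totalDegree hxi)
    omega
  have h1 : Order.height pt ≤ ((1 : ℕ) : ℕ∞) := by
    rw [Order.height_le_coe_iff]
    intro q hq
    have hq0 : Order.height q = 0 := by
      rw [Order.height_eq_zero]
      intro b hb
      rw [← PrimeSpectrum.asIdeal_le_asIdeal] at hb ⊢
      rw [hbot q hq]
      rw [hbot q hq] at hb
      exact le_bot_iff.mp hb ▸ le_rfl
    rw [hq0]
    norm_num
  have hcon : (2 : ℕ∞) ≤ 1 := le_trans hht (le_trans h2 h1)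
  norm_num at hcon

private lemma aux_isMonomialIdeal_top :
    IsMonomialIdeal (⊤ : Ideal (MvPolynomial (Fin n) K)) := by
  refine ⟨{0}, ?_⟩
  rw [Set.image_singleton]
  rw [show (monomial (0 : Fin n →₀ ℕ) (1:K) : MvPolynomial (Fin n) K) = 1 by simp]
  rw [Ideal.span_singleton_one]

private lemma aux_isMonomialIdeal_mul (d : Fin n →₀ ℕ) {I : Ideal (MvPolynomial (Fin n) K)}
    (hI : IsMonomialIdeal I) :
    IsMonomialIdeal (Ideal.span {(monomial d (1:K) : MvPolynomial (Fin n) K)} * I) := by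
  obtain ⟨G, rfl⟩ := hI
  refine ⟨(fun e => d + e) '' G, ?_⟩
  have hfun : (fun e => (monomial d (1:K) : MvPolynomial (Fin n) K) * monomial e 1)
      = fun e => (monomial (d + e) (1:K) : MvPolynomial (Fin n) K) := by
    funext e; rw [monomial_mul, one_mul]
  rw [Ideal.span_mul_span', Set.singleton_mul, Set.image_image, Set.image_image, hfun]

private lemma aux_span_mul_lt {c : MvPolynomial (Fin n) K} (hc : c ≠ 0)
    {P N : Ideal (MvPolynomial (Fin n) K)} (h : P < N) :
    Ideal.span {c} * P < Ideal.span {c} * N := by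
  refine lt_of_le_of_ne (Ideal.mul_mono_right h.le) fun heq => ?_
  obtain ⟨x, hxN, hxP⟩ := SetLike.exists_of_lt h
  have hx : c * x ∈ Ideal.span {c} * N :=
    Ideal.mul_mem_mul (Ideal.mem_span_singleton_self c) hxN
  rw [← heq] at hx
  obtain ⟨z, hzP, hz⟩ := Ideal.mem_span_singleton_mul.mp hx
  exact hxP ((mul_left_cancel₀ hc hz) ▸ hzP)

private noncomputable def aux_mulEquiv (c : MvPolynomial (Fin n) K) (hc : c ≠ 0)
    (N : Ideal (MvPolynomial (Fin n) K)) :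
    N ≃ₗ[MvPolynomial (Fin n) K] (Ideal.span {c} * N : Ideal (MvPolynomial (Fin n) K)) :=
  LinearEquiv.ofBijective
    { toFun := fun x => ⟨c * x.1, Ideal.mul_mem_mul (Ideal.mem_span_singleton_self c) x.2⟩
      map_add' := fun x y => by ext; simp [mul_add]
      map_smul' := fun s x => by ext; simp; ring }
    ⟨fun x y hxy => Subtype.ext (mul_left_cancel₀ hc (congrArg Subtype.val hxy)),
     fun y => by
      obtain ⟨z, hz, hz'⟩ := Ideal.mem_span_singleton_mul.mp y.2
      exact ⟨⟨z, hz⟩, Subtype.ext hz'⟩⟩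

private lemma aux_mulEquiv_apply (c : MvPolynomial (Fin n) K) (hc : c ≠ 0)
    (N : Ideal (MvPolynomial (Fin n) K)) (x : N) :
    (aux_mulEquiv c hc N x : MvPolynomial (Fin n) K) = c * x := rfl

private lemma aux_quot_equiv (c : MvPolynomial (Fin n) K) (hc : c ≠ 0)
    {P N : Ideal (MvPolynomial (Fin n) K)} (hPN : P ≤ N) :
    Nonempty ((↥(Ideal.span {c} * N) ⧸
        Submodule.comap (Ideal.span {c} * N).subtype (Ideal.span {c} * P))
      ≃ₗ[MvPolynomial (Fin n) K] (↥N ⧸ Submodule.comap N.subtype P)) := by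
  refine ⟨(Submodule.Quotient.equiv _ _ (aux_mulEquiv c hc N) ?_).symm⟩
  ext x
  simp only [Submodule.mem_map, Submodule.mem_comap]
  constructor
  · rintro ⟨y, hyP, rfl⟩
    show (aux_mulEquiv c hc N y : MvPolynomial (Fin n) K) ∈ Ideal.span {c} * P
    rw [aux_mulEquiv_apply]
    exact Ideal.mul_mem_mul (Ideal.mem_span_singleton_self c) hyP
  · intro hx
    obtain ⟨z, hzP, hz⟩ := Ideal.mem_span_singleton_mul.mp hx
    exact ⟨⟨z, hPN hzP⟩, hzP, Subtype.ext hz⟩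

private lemma aux_top_quot_equiv (Q : Ideal (MvPolynomial (Fin n) K)) :
    Nonempty ((↥(⊤ : Ideal (MvPolynomial (Fin n) K)) ⧸
        Submodule.comap (⊤ : Ideal (MvPolynomial (Fin n) K)).subtype Q)
      ≃ₗ[MvPolynomial (Fin n) K] (MvPolynomial (Fin n) K ⧸ Q)) := by
  refine ⟨Submodule.Quotient.equiv _ _ (Submodule.topEquiv) ?_⟩
  ext x
  simp only [Submodule.mem_map, Submodule.mem_comap]
  constructor
  · rintro ⟨y, hy, rfl⟩
    exact hy
  · intro hx
    exact ⟨⟨x, trivial⟩, hx, rfl⟩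

/-- Auxiliary strengthened version of `IsPrettyClean`: every prime in the chain either
contains `J` or is generated by a single variable. -/
private def APC (J I : Ideal (MvPolynomial (Fin n) K)) : Prop :=
  ∃ (r : ℕ) (F : Fin (r + 1) → Ideal (MvPolynomial (Fin n) K))
    (p : Fin r → Ideal (MvPolynomial (Fin n) K)),
    (∀ i, IsMonomialIdeal (F i)) ∧ F 0 = I ∧ F (Fin.last r) = ⊤ ∧
    (∀ i : Fin r, F i.castSucc < F i.succ) ∧
    (∀ i : Fin r, IsMonomialPrime (p i) ∧
      Nonempty ((↥(F i.succ) ⧸ (Submodule.comap (F i.succ).subtype (F i.castSucc)))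
        ≃ₗ[MvPolynomial (Fin n) K] (MvPolynomial (Fin n) K ⧸ p i))) ∧
    (∀ i j : Fin r, i < j → p i ≤ p j → p i = p j) ∧
    (∀ i : Fin r, J ≤ p i ∨ ∃ a : Fin n, p i = Ideal.span {(X a : MvPolynomial (Fin n) K)})

private lemma aux_congr_quot {A A' B B' q q' : Ideal (MvPolynomial (Fin n) K)}
    (hA : A = A') (hB : B = B') (hq : q = q')
    (h : Nonempty ((↥A' ⧸ Submodule.comap A'.subtype B')
      ≃ₗ[MvPolynomial (Fin n) K] (MvPolynomial (Fin n) K ⧸ q'))) :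
    Nonempty ((↥A ⧸ Submodule.comap A.subtype B)
      ≃ₗ[MvPolynomial (Fin n) K] (MvPolynomial (Fin n) K ⧸ q)) := by
  subst hA; subst hB; subst hq; exact h

private lemma aux_base {J : Ideal (MvPolynomial (Fin n) K)} (h : IsPrettyClean J) :
    APC J J := by
  obtain ⟨r, F, p, hmono, h0, hlast, hstrict, hiso, hcomp⟩ := h
  refine ⟨r, F, p, hmono, h0, hlast, hstrict, hiso, hcomp, ?_⟩
  intro i
  left
  intro c hc
  obtain ⟨hp, ⟨e⟩⟩ := hiso i
  have hmonoF : Monotone F := (Fin.strictMono_iff_lt_succ.mpr hstrict).monotone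
  have hcF : c ∈ F i.castSucc := hmonoF (Fin.zero_le _) (h0.symm ▸ hc)
  obtain ⟨w, hw⟩ := Submodule.Quotient.mk_surjective _
    (e.symm (Submodule.Quotient.mk (1 : MvPolynomial (Fin n) K)))
  have hz : c • (Submodule.Quotient.mk w :
      ↥(F i.succ) ⧸ (Submodule.comap (F i.succ).subtype (F i.castSucc))) = 0 := by
    rw [← Submodule.Quotient.mk_smul, Submodule.Quotient.mk_eq_zero]
    show ((c • w : ↥(F i.succ)) : MvPolynomial (Fin n) K) ∈ F i.castSucc
    rw [Submodule.coe_smul, smul_eq_mul]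
    exact Ideal.mul_mem_right _ _ hcF
  rw [hw, ← map_smul] at hz
  have hz2 := (LinearEquiv.map_eq_zero_iff e.symm).mp hz
  rw [← Submodule.Quotient.mk_smul, smul_eq_mul, mul_one] at hz2
  exact (Submodule.Quotient.mk_eq_zero _).mp hz2

private lemma aux_step {J : Ideal (MvPolynomial (Fin n) K)} (hht : 2 ≤ idealHeight J)
    (k : Fin n) {I' : Ideal (MvPolynomial (Fin n) K)} (h : APC J I') :
    APC J (Ideal.span {(X k : MvPolynomial (Fin n) K)} * I') := by
  obtain ⟨r, F, p, hmono, h0, hlast, hstrict, hiso, hcomp, hinv⟩ := h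
  have hcp := aux_prime_X (K := K) k
  have hc0 : (X k : MvPolynomial (Fin n) K) ≠ 0 := hcp.ne_zero
  refine ⟨r + 1,
    Fin.snoc (fun i => Ideal.span {(X k : MvPolynomial (Fin n) K)} * F i) ⊤,
    Fin.snoc p (Ideal.span {(X k : MvPolynomial (Fin n) K)}),
    ?_, ?_, ?_, ?_, ?_, ?_, ?_⟩
  · intro i
    induction i using Fin.lastCases with
    | last => rw [Fin.snoc_last]; exact aux_isMonomialIdeal_top
    | cast j =>
      rw [Fin.snoc_castSucc]
      rw [show (X k : MvPolynomial (Fin n) K) = monomial (Finsupp.single k 1) (1 : K) by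
        rw [← X_pow_eq_monomial, pow_one]]
      exact aux_isMonomialIdeal_mul _ (hmono j)
  · rw [show (0 : Fin (r+2)) = Fin.castSucc 0 from rfl, Fin.snoc_castSucc, h0]
  · exact Fin.snoc_last _ _
  · intro i
    induction i using Fin.lastCases with
    | last =>
      rw [Fin.succ_last, Fin.snoc_last, Fin.snoc_castSucc, hlast, Ideal.mul_top]
      exact lt_top_iff_ne_top.mpr (fun ht => hcp.not_unit (Ideal.span_singleton_eq_top.mp ht))
    | cast j =>
      rw [Fin.succ_castSucc, Fin.snoc_castSucc, Fin.snoc_castSucc]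
      exact aux_span_mul_lt hc0 (hstrict j)
  · intro i
    induction i using Fin.lastCases with
    | last =>
      have hA : (Fin.snoc (fun i => Ideal.span {(X k : MvPolynomial (Fin n) K)} * F i) ⊤ :
          Fin (r+2) → Ideal (MvPolynomial (Fin n) K)) (Fin.last r).succ = ⊤ := by
        rw [Fin.succ_last, Fin.snoc_last]
      have hB : (Fin.snoc (fun i => Ideal.span {(X k : MvPolynomial (Fin n) K)} * F i) ⊤ :
          Fin (r+2) → Ideal (MvPolynomial (Fin n) K)) (Fin.last r).castSucc
          = Ideal.span {(X k : MvPolynomial (Fin n) K)} := by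
        rw [Fin.snoc_castSucc, hlast, Ideal.mul_top]
      have hq : (Fin.snoc p (Ideal.span {(X k : MvPolynomial (Fin n) K)}) :
          Fin (r+1) → Ideal (MvPolynomial (Fin n) K)) (Fin.last r)
          = Ideal.span {(X k : MvPolynomial (Fin n) K)} := Fin.snoc_last _ _
      refine ⟨?_, ?_⟩
      · rw [hq]; exact ⟨{k}, by rw [Set.image_singleton]⟩
      · exact aux_congr_quot hA hB hq (aux_top_quot_equiv _)
    | cast j =>
      obtain ⟨hp1, ⟨e⟩⟩ := hiso j
      obtain ⟨E⟩ := aux_quot_equiv (X k : MvPolynomial (Fin n) K) hc0 (hstrict j).le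
      have hA : (Fin.snoc (fun i => Ideal.span {(X k : MvPolynomial (Fin n) K)} * F i) ⊤ :
          Fin (r+2) → Ideal (MvPolynomial (Fin n) K)) j.castSucc.succ
          = Ideal.span {(X k : MvPolynomial (Fin n) K)} * F j.succ := by
        rw [Fin.succ_castSucc, Fin.snoc_castSucc]
      have hB : (Fin.snoc (fun i => Ideal.span {(X k : MvPolynomial (Fin n) K)} * F i) ⊤ :
          Fin (r+2) → Ideal (MvPolynomial (Fin n) K)) j.castSucc.castSucc
          = Ideal.span {(X k : MvPolynomial (Fin n) K)} * F j.castSucc := by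
        rw [Fin.snoc_castSucc]
      have hq : (Fin.snoc p (Ideal.span {(X k : MvPolynomial (Fin n) K)}) :
          Fin (r+1) → Ideal (MvPolynomial (Fin n) K)) j.castSucc = p j :=
        Fin.snoc_castSucc _ _ _
      refine ⟨?_, ?_⟩
      · rw [hq]; exact hp1
      · exact aux_congr_quot hA hB hq ⟨E.trans e⟩
  · intro i j hij hle
    induction j using Fin.lastCases with
    | last =>
      induction i using Fin.lastCases with
      | last => rfl
      | cast i' =>
        rw [Fin.snoc_castSucc] at hle ⊢
        rw [Fin.snoc_last] at hle ⊢
        rcases hinv i' with hJ | ⟨a, ha⟩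
        · exact absurd (le_trans hJ hle) (aux_not_le_span_X hht k)
        · have hXa : (X a : MvPolynomial (Fin n) K) ∈
              Ideal.span {(X k : MvPolynomial (Fin n) K)} :=
            hle (ha ▸ Ideal.mem_span_singleton_self _)
          have hak : k = a := MvPolynomial.X_dvd_X.mp (Ideal.mem_span_singleton.mp hXa)
          rw [ha, hak]
    | cast j' =>
      induction i using Fin.lastCases with
      | last => exact absurd (hij.trans (Fin.castSucc_lt_last j')) (lt_irrefl _)
      | cast i' =>
        rw [Fin.snoc_castSucc, Fin.snoc_castSucc] at hle ⊢
        exact hcomp i' j' (Fin.castSucc_lt_castSucc_iff.mp hij) hle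
  · intro i
    induction i using Fin.lastCases with
    | last => rw [Fin.snoc_last]; exact Or.inr ⟨k, rfl⟩
    | cast j => rw [Fin.snoc_castSucc]; exact hinv j

private lemma aux_main {J : Ideal (MvPolynomial (Fin n) K)} (hht : 2 ≤ idealHeight J)
    (hpc : IsPrettyClean J) :
    ∀ (d : ℕ) (u : Fin n →₀ ℕ), (u.sum fun _ m => m) = d →
      APC J (Ideal.span {(monomial u (1:K) : MvPolynomial (Fin n) K)} * J) := by
  intro d
  induction d with
  | zero =>
    intro u hu
    have hu0 : u = 0 := by
      ext i
      by_contra hi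
      have hiS : i ∈ u.support := Finsupp.mem_support_iff.mpr (by simpa using hi)
      have hle : u i ≤ u.sum fun _ m => m :=
        Finset.single_le_sum (f := fun a => u a) (fun _ _ => Nat.zero_le _) hiS
      simp only [Finsupp.coe_zero, Pi.zero_apply] at hi
      omega
    subst hu0
    rw [show (monomial (0 : Fin n →₀ ℕ) (1:K) : MvPolynomial (Fin n) K) = 1 by simp,
      Ideal.span_singleton_one, Ideal.top_mul]
    exact aux_base hpc
  | succ d ih =>
    intro u hu
    have hne : u ≠ 0 := by
      rintro rfl
      simp at hu
    obtain ⟨k, hk⟩ := Finsupp.support_nonempty_iff.mpr hne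
    have hk1 : 1 ≤ u k := Nat.one_le_iff_ne_zero.mpr (Finsupp.mem_support_iff.mp hk)
    set u' := u - Finsupp.single k 1 with hu'
    have hsplit : u = Finsupp.single k 1 + u' := by
      ext i
      rw [hu']
      simp only [Finsupp.coe_add, Finsupp.coe_tsub, Pi.add_apply, Pi.sub_apply,
        Finsupp.single_apply]
      by_cases hik : k = i
      · subst hik; simp; omega
      · simp [hik]
    have hdeg : (u'.sum fun _ m => m) = d := by
      have hs := congrArg (fun v : Fin n →₀ ℕ => v.sum fun _ m => m) hsplit
      rw [Finsupp.sum_add_index' (fun _ => rfl) (fun _ _ _ => rfl)] at hs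
      rw [Finsupp.sum_single_index rfl] at hs
      omega
    have hA := aux_step hht k (ih u' hdeg)
    have hm : (monomial u (1:K) : MvPolynomial (Fin n) K) = X k * monomial u' 1 := by
      rw [hsplit, monomial_single_add, pow_one]
    rw [hm, ← Ideal.span_singleton_mul_span_singleton, mul_assoc]
    exact hA

end AuxPrettyCleanLemma

/-- Lemma 2.2: If `I = u·J` for a monomial `u`, with `I, J` monomial ideals
and `ht J ≥ 2`, then pretty cleanness of `S/J` implies pretty cleanness of `S/I`. -/
theorem prettyClean_of_monomial_mul {K : Type*} [Field K] {n : ℕ}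
    (I J : Ideal (MvPolynomial (Fin n) K)) (hI : IsMonomialIdeal I) (hJ : IsMonomialIdeal J)
    (u : Fin n →₀ ℕ) (huJ : I = Ideal.span {(monomial u (1 : K) : MvPolynomial (Fin n) K)} * J)
    (hht : 2 ≤ idealHeight J) (hpc : IsPrettyClean J) : IsPrettyClean I := by
  rw [huJ]
  obtain ⟨r, F, p, a1, a2, a3, a4, a5, a6, _⟩ := aux_main hht hpc _ u rfl
  exact ⟨r, F, p, a1, a2, a3, a4, a5, a6⟩
end

section
/- Let K be a field, I ⊂ S₁ = K[x₁,…,x_m] and J ⊂ S₂ = K[x_{m+1},…,xₙ] monomial ideals, S = K[x₁,…,xₙ], Q₁ = (x₁,…,x_m), Q₂ = (x_{m+1},…,xₙ), and Q = (x_i x_j : 1 ≤ i ≤ m, m+1 ≤ j ≤ n). Then (I, J, Q) = (J, Q₁) ∩ (I, Q₂) as ideals of S. -/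
open MvPolynomial

variable {K : Type*} [Field K] {σ : Type*}

private lemma aux_monomial_mem_span_X {σ R : Type*} [CommSemiring R] (d : σ →₀ ℕ) (c : R)
    (i : σ) (hi : d i ≠ 0) (s : Set (MvPolynomial σ R)) (hX : X i ∈ s) :
    monomial d c ∈ Ideal.span s := by
  have hle : Finsupp.single i 1 ≤ d := by
    rw [Finsupp.single_le_iff]; omega
  have hrw : monomial d c = X i * monomial (d - Finsupp.single i 1) c := by
    have : (X i : MvPolynomial σ R) = monomial (Finsupp.single i 1) 1 := rfl
    rw [this, monomial_mul, one_mul, add_tsub_cancel_of_le hle]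
  rw [hrw]
  exact Ideal.mul_mem_right _ _ (Ideal.subset_span hX)

private lemma aux_monomial_mem_span_XX {σ R : Type*} [CommSemiring R] (d : σ →₀ ℕ) (c : R)
    (i j : σ) (hij : i ≠ j) (hi : d i ≠ 0) (hj : d j ≠ 0)
    (s : Set (MvPolynomial σ R)) (hX : X i * X j ∈ s) :
    monomial d c ∈ Ideal.span s := by
  have hle : Finsupp.single i 1 + Finsupp.single j 1 ≤ d := by
    rw [Finsupp.le_def]
    intro k
    simp only [Finsupp.add_apply]
    by_cases h1 : i = k
    · subst h1
      rw [Finsupp.single_eq_same, Finsupp.single_eq_of_ne' hij.symm]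
      omega
    · rw [Finsupp.single_eq_of_ne' h1]
      by_cases h2 : j = k
      · subst h2
        rw [Finsupp.single_eq_same]
        omega
      · rw [Finsupp.single_eq_of_ne' h2]
        omega
  have hxx : (X i * X j : MvPolynomial σ R)
      = monomial (Finsupp.single i 1 + Finsupp.single j 1) 1 := by
    have h1 : (X i : MvPolynomial σ R) = monomial (Finsupp.single i 1) 1 := rfl
    have h2 : (X j : MvPolynomial σ R) = monomial (Finsupp.single j 1) 1 := rfl
    rw [h1, h2, monomial_mul, one_mul]
  have hrw : monomial d c
      = (X i * X j) * monomial (d - (Finsupp.single i 1 + Finsupp.single j 1)) c := by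
    rw [hxx, monomial_mul, one_mul, add_tsub_cancel_of_le hle]
  rw [hrw]
  exact Ideal.mul_mem_right _ _ (Ideal.subset_span hX)

private lemma aux_aeval_monomial_self {σ R : Type*} [CommSemiring R]
    (g : σ → MvPolynomial σ R) (d : σ →₀ ℕ) (c : R)
    (h : ∀ i ∈ d.support, g i = X i) :
    aeval g (monomial d c) = monomial d c := by
  rw [aeval_monomial]
  have hp : (d.prod fun i k => g i ^ k) = d.prod fun i k => (X i : MvPolynomial σ R) ^ k :=
    Finsupp.prod_congr fun i hi => by rw [h i hi]
  rw [hp, algebraMap_eq, ← monomial_eq]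

private lemma aux_aeval_monomial_zero {σ R : Type*} [CommSemiring R]
    (g : σ → MvPolynomial σ R) (d : σ →₀ ℕ) (c : R) (j : σ) (hj : d j ≠ 0)
    (h : g j = 0) :
    aeval g (monomial d c) = 0 := by
  rw [aeval_monomial]
  have hp : (d.prod fun i k => g i ^ k) = 0 :=
    Finset.prod_eq_zero (Finsupp.mem_support_iff.mpr hj)
      (by show g j ^ d j = 0; rw [h]; exact zero_pow hj)
  rw [hp, mul_zero]

/-- from the proof of Proposition 2.9: For proper monomial ideals
`I ⊂ S₁ = K[x₁,…,x_m]` and `J ⊂ S₂ = K[x_{m+1},…,xₙ]`, one has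
`(I, J, Q) = (J, Q₁) ∩ (I, Q₂)` in `S = K[x₁,…,xₙ]`, where `Q₁ = (x₁,…,x_m)`,
`Q₂ = (x_{m+1},…,xₙ)` and `Q = (x_i x_j : i ≤ m < j)`. -/
theorem sum_with_mixed_products_eq_inter {K : Type*} [Field K] (m n : ℕ) (hmn : m ≤ n)
    (I : Ideal (MvPolynomial {i : Fin n // (i : ℕ) < m} K))
    (J : Ideal (MvPolynomial {i : Fin n // ¬ (i : ℕ) < m} K))
    (hI : IsMonomialIdeal I) (hJ : IsMonomialIdeal J)
    (hIproper : I ≠ ⊤) (hJproper : J ≠ ⊤)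
    (Q₁ Q₂ Q : Ideal (MvPolynomial (Fin n) K))
    (hQ₁ : Q₁ = Ideal.span {f : MvPolynomial (Fin n) K | ∃ i : Fin n, (i : ℕ) < m ∧ f = X i})
    (hQ₂ : Q₂ = Ideal.span {f : MvPolynomial (Fin n) K | ∃ j : Fin n, ¬ (j : ℕ) < m ∧ f = X j})
    (hQ : Q = Ideal.span {f : MvPolynomial (Fin n) K |
      ∃ i j : Fin n, (i : ℕ) < m ∧ ¬ (j : ℕ) < m ∧ f = X i * X j}) :
    Ideal.map (rename (Subtype.val : {i : Fin n // (i : ℕ) < m} → Fin n)) I ⊔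
      Ideal.map (rename (Subtype.val : {i : Fin n // ¬ (i : ℕ) < m} → Fin n)) J ⊔ Q =
    (Ideal.map (rename (Subtype.val : {i : Fin n // ¬ (i : ℕ) < m} → Fin n)) J ⊔ Q₁) ⊓
      (Ideal.map (rename (Subtype.val : {i : Fin n // (i : ℕ) < m} → Fin n)) I ⊔ Q₂) := by
  obtain ⟨GI, hGI⟩ := hI
  obtain ⟨GJ, hGJ⟩ := hJ
  set I' := Ideal.map (rename (Subtype.val : {i : Fin n // (i : ℕ) < m} → Fin n)) I with hI'
  set J' := Ideal.map (rename (Subtype.val : {i : Fin n // ¬ (i : ℕ) < m} → Fin n)) J with hJ'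
  set g₁ : Fin n → MvPolynomial (Fin n) K := fun i => if (i : ℕ) < m then X i else 0 with hg₁
  set g₂ : Fin n → MvPolynomial (Fin n) K := fun i => if (i : ℕ) < m then 0 else X i with hg₂
  set g₀ : Fin n → MvPolynomial (Fin n) K := fun _ => 0 with hg₀
  -- I' ≤ Q₁
  have hI'Q₁ : I' ≤ Q₁ := by
    rw [hI', hGI, Ideal.map_span, Ideal.span_le]
    rintro _ ⟨_, ⟨d, hdG, rfl⟩, rfl⟩
    have hd0 : d ≠ 0 := by
      rintro rfl
      apply hIproper
      rw [Ideal.eq_top_iff_one, hGI]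
      exact Ideal.subset_span ⟨0, hdG, by simp [monomial_zero']⟩
    obtain ⟨i, his⟩ := Finsupp.support_nonempty_iff.mpr hd0
    rw [rename_monomial, hQ₁]
    refine aux_monomial_mem_span_X _ _ (i : Fin n) ?_ _ ⟨i, i.2, rfl⟩
    rw [Finsupp.mapDomain_apply Subtype.val_injective]
    exact Finsupp.mem_support_iff.mp his
  have hJ'Q₂ : J' ≤ Q₂ := by
    rw [hJ', hGJ, Ideal.map_span, Ideal.span_le]
    rintro _ ⟨_, ⟨d, hdG, rfl⟩, rfl⟩
    have hd0 : d ≠ 0 := by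
      rintro rfl
      apply hJproper
      rw [Ideal.eq_top_iff_one, hGJ]
      exact Ideal.subset_span ⟨0, hdG, by simp [monomial_zero']⟩
    obtain ⟨j, hjs⟩ := Finsupp.support_nonempty_iff.mpr hd0
    rw [rename_monomial, hQ₂]
    refine aux_monomial_mem_span_X _ _ (j : Fin n) ?_ _ ⟨j, j.2, rfl⟩
    rw [Finsupp.mapDomain_apply Subtype.val_injective]
    exact Finsupp.mem_support_iff.mp hjs
  -- Q ≤ Q₁, Q ≤ Q₂
  have hQQ₁ : Q ≤ Q₁ := by
    rw [hQ, hQ₁, Ideal.span_le]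
    rintro _ ⟨i, j, hi, hj, rfl⟩
    exact Ideal.mul_mem_right _ _ (Ideal.subset_span ⟨i, hi, rfl⟩)
  have hQQ₂ : Q ≤ Q₂ := by
    rw [hQ, hQ₂, Ideal.span_le]
    rintro _ ⟨i, j, hi, hj, rfl⟩
    exact Ideal.mul_mem_left _ _ (Ideal.subset_span ⟨j, hj, rfl⟩)
  -- p₁ fixes rename val₁, p₂ fixes rename val₂
  have hcomp₁ : (aeval g₁).comp (rename (Subtype.val : {i : Fin n // (i : ℕ) < m} → Fin n))
      = rename (Subtype.val : {i : Fin n // (i : ℕ) < m} → Fin n) := by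
    apply MvPolynomial.algHom_ext
    intro i
    simp [hg₁, i.2]
  have hcomp₂ : (aeval g₂).comp (rename (Subtype.val : {i : Fin n // ¬ (i : ℕ) < m} → Fin n))
      = rename (Subtype.val : {i : Fin n // ¬ (i : ℕ) < m} → Fin n) := by
    apply MvPolynomial.algHom_ext
    intro i
    simp [hg₂, i.2]
  -- p₁ kills Q₂, p₂ kills Q₁, p₀ kills both
  have hQ₂ker : ∀ f ∈ Q₂, aeval g₁ f = 0 := by
    intro f hf
    have h : Q₂ ≤ Ideal.comap (aeval g₁) ⊥ := by
      rw [hQ₂, Ideal.span_le]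
      rintro _ ⟨j, hj, rfl⟩
      simp [Ideal.mem_comap, hg₁, hj]
    simpa using h hf
  have hQ₁ker : ∀ f ∈ Q₁, aeval g₂ f = 0 := by
    intro f hf
    have h : Q₁ ≤ Ideal.comap (aeval g₂) ⊥ := by
      rw [hQ₁, Ideal.span_le]
      rintro _ ⟨i, hi, rfl⟩
      simp [Ideal.mem_comap, hg₂, hi]
    simpa using h hf
  have hker₀ : ∀ f ∈ I' ⊔ Q₂, aeval g₀ f = 0 := by
    have hQ₁0 : Q₁ ≤ Ideal.comap (aeval g₀) ⊥ := by
      rw [hQ₁, Ideal.span_le]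
      rintro _ ⟨i, hi, rfl⟩
      simp [Ideal.mem_comap, hg₀]
    have hQ₂0 : Q₂ ≤ Ideal.comap (aeval g₀) ⊥ := by
      rw [hQ₂, Ideal.span_le]
      rintro _ ⟨j, hj, rfl⟩
      simp [Ideal.mem_comap, hg₀]
    intro f hf
    have := sup_le (hI'Q₁.trans hQ₁0) hQ₂0 hf
    simpa using this
  -- aeval g₁ maps I' ⊔ Q₂ into I'
  have hmem₁ : ∀ f ∈ I' ⊔ Q₂, aeval g₁ f ∈ I' := by
    have hIstab : I' ≤ Ideal.comap (aeval g₁) I' := by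
      rw [hI']
      refine Ideal.map_le_iff_le_comap.mpr fun g hg => ?_
      rw [Ideal.mem_comap, Ideal.mem_comap]
      have := AlgHom.congr_fun hcomp₁ g
      simp only [AlgHom.comp_apply] at this
      rw [this]
      exact Ideal.mem_map_of_mem _ hg
    intro f hf
    obtain ⟨a, ha, b, hb, rfl⟩ := Submodule.mem_sup.mp hf
    rw [map_add, hQ₂ker b hb, add_zero]
    exact Ideal.mem_comap.mp (hIstab ha)
  have hmem₂ : ∀ f ∈ J' ⊔ Q₁, aeval g₂ f ∈ J' := by
    have hJstab : J' ≤ Ideal.comap (aeval g₂) J' := by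
      rw [hJ']
      refine Ideal.map_le_iff_le_comap.mpr fun g hg => ?_
      rw [Ideal.mem_comap, Ideal.mem_comap]
      have := AlgHom.congr_fun hcomp₂ g
      simp only [AlgHom.comp_apply] at this
      rw [this]
      exact Ideal.mem_map_of_mem _ hg
    intro f hf
    obtain ⟨a, ha, b, hb, rfl⟩ := Submodule.mem_sup.mp hf
    rw [map_add, hQ₁ker b hb, add_zero]
    exact Ideal.mem_comap.mp (hJstab ha)
  -- the "mixed part" lemma
  have hLQ : ∀ f : MvPolynomial (Fin n) K,
      f - aeval g₁ f - aeval g₂ f + aeval g₀ f ∈ Q := by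
    intro f
    induction f using MvPolynomial.induction_on' with
    | add p q hp hq =>
      have h := Ideal.add_mem Q hp hq
      convert h using 1
      simp only [map_add]
      ring
    | monomial d c =>
      by_cases hd0 : d = 0
      · subst hd0
        have e1 : aeval g₁ (monomial 0 c) = monomial 0 c :=
          aux_aeval_monomial_self _ _ _ (by simp)
        have e2 : aeval g₂ (monomial 0 c) = monomial 0 c :=
          aux_aeval_monomial_self _ _ _ (by simp)
        have e0 : aeval g₀ (monomial 0 c) = monomial 0 c :=
          aux_aeval_monomial_self _ _ _ (by simp)
        rw [e1, e2, e0]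
        have : monomial (0 : Fin n →₀ ℕ) c - monomial 0 c - monomial 0 c + monomial 0 c
            = 0 := by ring
        rw [this]
        exact Q.zero_mem
      · by_cases hA : ∃ j ∈ d.support, ¬ (j : ℕ) < m
        · obtain ⟨j, hjs, hjm⟩ := hA
          by_cases hB : ∃ i ∈ d.support, (i : ℕ) < m
          · -- mixed monomial
            obtain ⟨i, his, him⟩ := hB
            have hij : i ≠ j := fun h => hjm (h ▸ him)
            have e1 : aeval g₁ (monomial d c) = 0 :=
              aux_aeval_monomial_zero _ _ _ j (Finsupp.mem_support_iff.mp hjs)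
                (by simp [hg₁, hjm])
            have e2 : aeval g₂ (monomial d c) = 0 :=
              aux_aeval_monomial_zero _ _ _ i (Finsupp.mem_support_iff.mp his)
                (by simp [hg₂, him])
            have e0 : aeval g₀ (monomial d c) = 0 :=
              aux_aeval_monomial_zero _ _ _ i (Finsupp.mem_support_iff.mp his) rfl
            rw [e1, e2, e0, sub_zero, sub_zero, add_zero, hQ]
            exact aux_monomial_mem_span_XX d c i j hij (Finsupp.mem_support_iff.mp his)
              (Finsupp.mem_support_iff.mp hjs) _ ⟨i, j, him, hjm, rfl⟩
          · -- all variables ≥ m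
            push_neg at hB
            have e2 : aeval g₂ (monomial d c) = monomial d c :=
              aux_aeval_monomial_self _ _ _ (fun i hi => by simp [hg₂, hB i hi])
            have e1 : aeval g₁ (monomial d c) = 0 :=
              aux_aeval_monomial_zero _ _ _ j (Finsupp.mem_support_iff.mp hjs)
                (by simp [hg₁, hjm])
            have e0 : aeval g₀ (monomial d c) = 0 :=
              aux_aeval_monomial_zero _ _ _ j (Finsupp.mem_support_iff.mp hjs) rfl
            rw [e1, e2, e0, sub_zero, add_zero, sub_self]
            exact Q.zero_mem
        · -- all variables < m
          push_neg at hA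
          obtain ⟨i, his⟩ := Finsupp.support_nonempty_iff.mpr hd0
          have e1 : aeval g₁ (monomial d c) = monomial d c :=
            aux_aeval_monomial_self _ _ _ (fun k hk => by simp [hg₁, hA k hk])
          have e2 : aeval g₂ (monomial d c) = 0 :=
            aux_aeval_monomial_zero _ _ _ i (Finsupp.mem_support_iff.mp his)
              (by simp [hg₂, hA i his])
          have e0 : aeval g₀ (monomial d c) = 0 :=
            aux_aeval_monomial_zero _ _ _ i (Finsupp.mem_support_iff.mp his) rfl
          rw [e1, e2, e0, sub_zero, add_zero, sub_self]
          exact Q.zero_mem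
  -- conclude
  apply le_antisymm
  · refine sup_le (sup_le ?_ ?_) (le_inf (hQQ₁.trans le_sup_right) (hQQ₂.trans le_sup_right))
    · exact le_inf (hI'Q₁.trans le_sup_right) le_sup_left
    · exact le_inf le_sup_left (hJ'Q₂.trans le_sup_right)
  · intro f hf
    obtain ⟨hf₁, hf₂⟩ := Submodule.mem_inf.mp hf
    have h1 : aeval g₁ f ∈ I' := hmem₁ f hf₂
    have h2 : aeval g₂ f ∈ J' := hmem₂ f hf₁
    have h0 : aeval g₀ f = 0 := hker₀ f hf₂
    have key : f = aeval g₁ f + aeval g₂ f + (f - aeval g₁ f - aeval g₂ f + aeval g₀ f) := by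
      rw [h0]; ring
    rw [key]
    exact add_mem (add_mem (Ideal.mem_sup_left (Ideal.mem_sup_left h1))
      (Ideal.mem_sup_left (Ideal.mem_sup_right h2))) (Ideal.mem_sup_right (hLQ f))
end

section
/- Let K be a field, T = K[u,v,w,x,y,z], and L = (uxy, vxz, wyz). Then L = (x,y) ∩ (x,z) ∩ (x,w) ∩ (y,z) ∩ (y,v) ∩ (z,u) ∩ (u,v,w). -/
open MvPolynomial

variable {K : Type*} [Field K] {σ : Type*}

set_option maxHeartbeats 1000000 in
/-- from the proof of Lemma 2.4: In `T = K[u,v,w,x,y,z]`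
(here `u = X 0, v = X 1, w = X 2, x = X 3, y = X 4, z = X 5`), the ideal
`L = (uxy, vxz, wyz)` equals `(x,y) ∩ (x,z) ∩ (x,w) ∩ (y,z) ∩ (y,v) ∩ (z,u) ∩ (u,v,w)`. -/
theorem L_eq_inter_primes {K : Type*} [Field K] :
    (Ideal.span {X 0 * X 3 * X 4, X 1 * X 3 * X 5, X 2 * X 4 * X 5} :
        Ideal (MvPolynomial (Fin 6) K)) =
      Ideal.span {X 3, X 4} ⊓ Ideal.span {X 3, X 5} ⊓ Ideal.span {X 3, X 2} ⊓
        Ideal.span {X 4, X 5} ⊓ Ideal.span {X 4, X 1} ⊓ Ideal.span {X 5, X 0} ⊓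
        Ideal.span {X 0, X 1, X 2} := by
  have e1 : (X 0 * X 3 * X 4 : MvPolynomial (Fin 6) K) =
      monomial (Finsupp.single 0 1 + Finsupp.single 3 1 + Finsupp.single 4 1) 1 := by
    simp [X, monomial_mul]
  have e2 : (X 1 * X 3 * X 5 : MvPolynomial (Fin 6) K) =
      monomial (Finsupp.single 1 1 + Finsupp.single 3 1 + Finsupp.single 5 1) 1 := by
    simp [X, monomial_mul]
  have e3 : (X 2 * X 4 * X 5 : MvPolynomial (Fin 6) K) =
      monomial (Finsupp.single 2 1 + Finsupp.single 4 1 + Finsupp.single 5 1) 1 := by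
    simp [X, monomial_mul]
  have hL : ({X 0 * X 3 * X 4, X 1 * X 3 * X 5, X 2 * X 4 * X 5} :
      Set (MvPolynomial (Fin 6) K)) = (fun d => monomial d (1 : K)) ''
      {Finsupp.single 0 1 + Finsupp.single 3 1 + Finsupp.single 4 1,
       Finsupp.single 1 1 + Finsupp.single 3 1 + Finsupp.single 5 1,
       Finsupp.single 2 1 + Finsupp.single 4 1 + Finsupp.single 5 1} := by
    rw [e1, e2, e3]; simp [Set.image_insert_eq]
  have hP : ∀ a b : Fin 6, ({X a, X b} : Set (MvPolynomial (Fin 6) K)) = X '' {a, b} := by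
    intro a b; simp [Set.image_insert_eq]
  have hP3 : ({X 0, X 1, X 2} : Set (MvPolynomial (Fin 6) K)) = X '' {0, 1, 2} := by
    simp [Set.image_insert_eq]
  have hd : ∀ (a b c : Fin 6) (m : Fin 6 →₀ ℕ), a ≠ b → a ≠ c → b ≠ c →
      ((Finsupp.single a 1 + Finsupp.single b 1 + Finsupp.single c 1 ≤ m) ↔
        (1 ≤ m a ∧ 1 ≤ m b ∧ 1 ≤ m c)) := by
    intro a b c m hab hac hbc
    rw [Finsupp.le_def]
    simp only [Finsupp.coe_add, Pi.add_apply, Finsupp.single_apply]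
    constructor
    · intro h
      refine ⟨?_, ?_, ?_⟩
      · have := h a; simp [hab, hac] at this; omega
      · have := h b; simp [hab.symm, hbc] at this; omega
      · have := h c; simp [hac.symm, hbc.symm] at this; omega
    · intro h i
      split_ifs <;> simp_all
  ext f
  rw [hL, hP 3 4, hP 3 5, hP 3 2, hP 4 5, hP 4 1, hP 5 0, hP3]
  simp only [Ideal.mem_inf, mem_ideal_span_monomial_image, mem_ideal_span_X_image,
    Set.mem_insert_iff, Set.mem_singleton_iff, exists_eq_or_imp, exists_eq_left]
  have key : ∀ m : Fin 6 →₀ ℕ,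
      ((Finsupp.single 0 1 + Finsupp.single 3 1 + Finsupp.single 4 1 ≤ m ∨
        Finsupp.single 1 1 + Finsupp.single 3 1 + Finsupp.single 5 1 ≤ m ∨
        Finsupp.single 2 1 + Finsupp.single 4 1 + Finsupp.single 5 1 ≤ m) ↔
      ((m 3 ≠ 0 ∨ m 4 ≠ 0) ∧ (m 3 ≠ 0 ∨ m 5 ≠ 0) ∧ (m 3 ≠ 0 ∨ m 2 ≠ 0) ∧
       (m 4 ≠ 0 ∨ m 5 ≠ 0) ∧ (m 4 ≠ 0 ∨ m 1 ≠ 0) ∧ (m 5 ≠ 0 ∨ m 0 ≠ 0) ∧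
       (m 0 ≠ 0 ∨ m 1 ≠ 0 ∨ m 2 ≠ 0))) := by
    intro m
    rw [hd 0 3 4 m (by decide) (by decide) (by decide),
        hd 1 3 5 m (by decide) (by decide) (by decide),
        hd 2 4 5 m (by decide) (by decide) (by decide)]
    omega
  constructor
  · intro h
    exact ⟨⟨⟨⟨⟨⟨fun m hm => ((key m).mp (h m hm)).1,
      fun m hm => ((key m).mp (h m hm)).2.1⟩,
      fun m hm => ((key m).mp (h m hm)).2.2.1⟩,
      fun m hm => ((key m).mp (h m hm)).2.2.2.1⟩,
      fun m hm => ((key m).mp (h m hm)).2.2.2.2.1⟩,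
      fun m hm => ((key m).mp (h m hm)).2.2.2.2.2.1⟩,
      fun m hm => ((key m).mp (h m hm)).2.2.2.2.2.2⟩
  · rintro ⟨⟨⟨⟨⟨⟨h1, h2⟩, h3⟩, h4⟩, h5⟩, h6⟩, h7⟩ m hm
    exact (key m).mpr ⟨h1 m hm, h2 m hm, h3 m hm, h4 m hm, h5 m hm, h6 m hm, h7 m hm⟩
end

section
/- Let K be a field and T = K[u,v,w,x,y,z]. The ideal (xy, xz, xw, yz, yv, zu, uvw) of T, which equals the Alexander dual L^∨ of L = (uxy, vxz, wyz), has linear quotients with respect to the order xy, xz, xw, yz, yv, zu, uvw. -/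
open MvPolynomial

variable {K : Type*} [Field K] {σ : Type*}

section Aux
variable {K : Type*} [Field K]


noncomputable def psiMap (s : Finset (Fin 6)) : MvPolynomial (Fin 6) K →ₐ[K] MvPolynomial (Fin 6) K :=
  aeval (fun i => if i ∈ s then 0 else X i)

lemma sub_psiMap_mem (s : Finset (Fin 6)) (f : MvPolynomial (Fin 6) K) :
    f - psiMap s f ∈ Ideal.span ((fun i => (X i : MvPolynomial (Fin 6) K)) '' s) := by
  induction f using MvPolynomial.induction_on with
  | C a => simp [psiMap]
  | add p q hp hq =>
      rw [map_add]
      have := Ideal.add_mem _ hp hq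
      convert this using 1
      ring
  | mul_X p i hp =>
      rw [map_mul]
      by_cases hi : i ∈ s
      · have hX : (X i : MvPolynomial (Fin 6) K) ∈ Ideal.span ((fun i => (X i : MvPolynomial (Fin 6) K)) '' s) :=
          Ideal.subset_span ⟨i, hi, rfl⟩
        have h1 := Ideal.mul_mem_left _ p hX
        have hz : psiMap (K := K) s (X i) = 0 := by simp [psiMap, hi]
        rw [hz, mul_zero, sub_zero]
        exact h1
      · have h2 := Ideal.mul_mem_right (X i) _ hp
        convert h2 using 1
        have : psiMap (K := K) s (X i) = X i := by simp [psiMap, hi]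
        rw [this]; ring

lemma ker_psiMap (s : Finset (Fin 6)) :
    RingHom.ker (psiMap (K := K) s).toRingHom =
      Ideal.span ((fun i => (X i : MvPolynomial (Fin 6) K)) '' s) := by
  apply le_antisymm
  · intro f hf
    have h0 : psiMap (K := K) s f = 0 := hf
    have := sub_psiMap_mem s f
    rwa [h0, sub_zero] at this
  · rw [Ideal.span_le]
    rintro _ ⟨i, hi, rfl⟩
    show psiMap (K := K) s (X i) = 0
    simp only [Finset.coe_sort_coe, Finset.mem_coe] at hi
    simp [psiMap, hi]

lemma X_mem_span_iff (s : Finset (Fin 6)) (i : Fin 6) :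
    (X i : MvPolynomial (Fin 6) K) ∈
      Ideal.span ((fun i => (X i : MvPolynomial (Fin 6) K)) '' s) ↔ i ∈ s := by
  rw [← ker_psiMap]
  constructor
  · intro h0
    have h0' : psiMap (K := K) s (X i) = 0 := h0
    by_contra hi
    rw [show psiMap (K := K) s (X i) = X i by simp [psiMap, hi]] at h0'
    exact X_ne_zero i h0'
  · intro hi
    show psiMap (K := K) s (X i) = 0
    simp [psiMap, hi]

lemma span_X_isPrime (s : Finset (Fin 6)) :
    (Ideal.span ((fun i => (X i : MvPolynomial (Fin 6) K)) '' s)).IsPrime := by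
  rw [← ker_psiMap]
  exact RingHom.ker_isPrime _

def covS : Fin 7 → Finset (Fin 6)
  | 0 => {3,4} | 1 => {3,5} | 2 => {3,2} | 3 => {4,5} | 4 => {4,1} | 5 => {5,0} | 6 => {0,1,2}

lemma covS_covers : ∀ k : Fin 7,
    ((0:Fin 6) ∈ covS k ∨ (3:Fin 6) ∈ covS k ∨ (4:Fin 6) ∈ covS k) ∧
    ((1:Fin 6) ∈ covS k ∨ (3:Fin 6) ∈ covS k ∨ (5:Fin 6) ∈ covS k) ∧
    ((2:Fin 6) ∈ covS k ∨ (4:Fin 6) ∈ covS k ∨ (5:Fin 6) ∈ covS k) := by decide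

lemma cover_exists : ∀ (i1 i2 i3 : Fin 6),
    (i1 = 0 ∨ i1 = 3 ∨ i1 = 4) → (i2 = 1 ∨ i2 = 3 ∨ i2 = 5) → (i3 = 2 ∨ i3 = 4 ∨ i3 = 5) →
    ∃ k : Fin 7, ∀ j ∈ covS k, j = i1 ∨ j = i2 ∨ j = i3 := by decide

lemma cover_min : ∀ (k : Fin 7) (i1 i2 i3 : Fin 6),
    (i1 = 0 ∨ i1 = 3 ∨ i1 = 4) ∧ (i2 = 1 ∨ i2 = 3 ∨ i2 = 5) ∧ (i3 = 2 ∨ i3 = 4 ∨ i3 = 5) ∧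
    i1 ∈ covS k ∧ i2 ∈ covS k ∧ i3 ∈ covS k →
    ∀ j ∈ covS k, j = i1 ∨ j = i2 ∨ j = i3 := by decide

lemma mul3_mem (s : Finset (Fin 6)) (a b c : Fin 6) (h : a ∈ s ∨ b ∈ s ∨ c ∈ s) :
    (X a * X b * X c : MvPolynomial (Fin 6) K) ∈
      Ideal.span ((fun i => (X i : MvPolynomial (Fin 6) K)) '' s) := by
  rcases h with h | h | h
  · have := Ideal.mul_mem_left _ (X b * X c) ((X_mem_span_iff (K := K) s a).mpr h)
    convert this using 1; ring
  · have := Ideal.mul_mem_left _ (X a * X c) ((X_mem_span_iff (K := K) s b).mpr h)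
    convert this using 1; ring
  · have := Ideal.mul_mem_left _ (X a * X b) ((X_mem_span_iff (K := K) s c).mpr h)
    exact this

lemma L_le_covS (k : Fin 7) :
    (Ideal.span {X 0 * X 3 * X 4, X 1 * X 3 * X 5, X 2 * X 4 * X 5} :
        Ideal (MvPolynomial (Fin 6) K)) ≤
      Ideal.span ((fun i => (X i : MvPolynomial (Fin 6) K)) '' covS k) := by
  rw [Ideal.span_le]
  rintro x hx
  obtain ⟨h1, h2, h3⟩ := covS_covers k
  simp only [Set.mem_insert_iff, Set.mem_singleton_iff] at hx
  rcases hx with rfl | rfl | rfl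
  · exact mul3_mem _ 0 3 4 h1
  · exact mul3_mem _ 1 3 5 h2
  · exact mul3_mem _ 2 4 5 h3

lemma exists_indices {p : Ideal (MvPolynomial (Fin 6) K)} (hp : p.IsPrime)
    (hL : (Ideal.span {X 0 * X 3 * X 4, X 1 * X 3 * X 5, X 2 * X 4 * X 5} :
        Ideal (MvPolynomial (Fin 6) K)) ≤ p) :
    ∃ i1 i2 i3 : Fin 6, (i1 = 0 ∨ i1 = 3 ∨ i1 = 4) ∧ (i2 = 1 ∨ i2 = 3 ∨ i2 = 5) ∧
      (i3 = 2 ∨ i3 = 4 ∨ i3 = 5) ∧ X i1 ∈ p ∧ X i2 ∈ p ∧ X i3 ∈ p := by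
  have h1 : (X 0 * X 3 * X 4 : MvPolynomial (Fin 6) K) ∈ p :=
    hL (Ideal.subset_span (by simp))
  have h2 : (X 1 * X 3 * X 5 : MvPolynomial (Fin 6) K) ∈ p :=
    hL (Ideal.subset_span (by simp))
  have h3 : (X 2 * X 4 * X 5 : MvPolynomial (Fin 6) K) ∈ p :=
    hL (Ideal.subset_span (by simp))
  have e1 : ∃ i1 : Fin 6, (i1 = 0 ∨ i1 = 3 ∨ i1 = 4) ∧ X i1 ∈ p := by
    rcases hp.mem_or_mem h1 with h | h
    · rcases hp.mem_or_mem h with h | h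
      · exact ⟨0, Or.inl rfl, h⟩
      · exact ⟨3, Or.inr (Or.inl rfl), h⟩
    · exact ⟨4, Or.inr (Or.inr rfl), h⟩
  have e2 : ∃ i2 : Fin 6, (i2 = 1 ∨ i2 = 3 ∨ i2 = 5) ∧ X i2 ∈ p := by
    rcases hp.mem_or_mem h2 with h | h
    · rcases hp.mem_or_mem h with h | h
      · exact ⟨1, Or.inl rfl, h⟩
      · exact ⟨3, Or.inr (Or.inl rfl), h⟩
    · exact ⟨5, Or.inr (Or.inr rfl), h⟩
  have e3 : ∃ i3 : Fin 6, (i3 = 2 ∨ i3 = 4 ∨ i3 = 5) ∧ X i3 ∈ p := by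
    rcases hp.mem_or_mem h3 with h | h
    · rcases hp.mem_or_mem h with h | h
      · exact ⟨2, Or.inl rfl, h⟩
      · exact ⟨4, Or.inr (Or.inl rfl), h⟩
    · exact ⟨5, Or.inr (Or.inr rfl), h⟩
  obtain ⟨i1, ha, hb⟩ := e1
  obtain ⟨i2, hc, hd⟩ := e2
  obtain ⟨i3, he, hf⟩ := e3
  exact ⟨i1, i2, i3, ha, hc, he, hb, hd, hf⟩

lemma mem_minimalPrimes_iff (s : Finset (Fin 6)) :
    Ideal.span ((fun i => (X i : MvPolynomial (Fin 6) K)) '' s) ∈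
      (Ideal.span {X 0 * X 3 * X 4, X 1 * X 3 * X 5, X 2 * X 4 * X 5} :
        Ideal (MvPolynomial (Fin 6) K)).minimalPrimes ↔ ∃ k, s = covS k := by
  constructor
  · rintro ⟨⟨hprime, hle⟩, hmin⟩
    obtain ⟨i1, i2, i3, ha, hc, he, hb, hd, hf⟩ := exists_indices hprime hle
    obtain ⟨k, hk⟩ := cover_exists i1 i2 i3 ha hc he
    have hsub : Ideal.span ((fun i => (X i : MvPolynomial (Fin 6) K)) '' covS k) ≤
        Ideal.span ((fun i => (X i : MvPolynomial (Fin 6) K)) '' s) := by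
      rw [Ideal.span_le]
      rintro _ ⟨j, hj, rfl⟩
      rw [Finset.mem_coe] at hj
      rcases hk j hj with rfl | rfl | rfl
      · exact hb
      · exact hd
      · exact hf
    have heq : Ideal.span ((fun i => (X i : MvPolynomial (Fin 6) K)) '' s) =
        Ideal.span ((fun i => (X i : MvPolynomial (Fin 6) K)) '' covS k) :=
      le_antisymm (hmin ⟨span_X_isPrime _, L_le_covS k⟩ hsub) hsub
    refine ⟨k, Finset.ext fun j => ?_⟩
    rw [← X_mem_span_iff (K := K), ← X_mem_span_iff (K := K) (covS k), heq]
  · rintro ⟨k, rfl⟩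
    refine ⟨⟨span_X_isPrime _, L_le_covS k⟩, ?_⟩
    rintro q ⟨hqprime, hqle⟩ hq
    obtain ⟨i1, i2, i3, ha, hc, he, hb, hd, hf⟩ := exists_indices hqprime hqle
    have m1 : i1 ∈ covS k := (X_mem_span_iff (K := K) _ i1).mp (hq hb)
    have m2 : i2 ∈ covS k := (X_mem_span_iff (K := K) _ i2).mp (hq hd)
    have m3 : i3 ∈ covS k := (X_mem_span_iff (K := K) _ i3).mp (hq hf)
    rw [Ideal.span_le]
    rintro _ ⟨j, hj, rfl⟩
    rw [Finset.mem_coe] at hj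
    rcases cover_min k i1 i2 i3 ⟨ha, hc, he, m1, m2, m3⟩ j hj with rfl | rfl | rfl
    · exact hb
    · exact hd
    · exact hf

lemma prod_covS (k : Fin 7) :
    (∏ i ∈ covS k, (X i : MvPolynomial (Fin 6) K)) =
      ![X 3 * X 4, X 3 * X 5, X 3 * X 2, X 4 * X 5, X 4 * X 1, X 5 * X 0,
        X 0 * X 1 * X 2] k := by
  have h : ∀ a b : Fin 6, a ≠ b →
      (∏ i ∈ ({a, b} : Finset (Fin 6)), (X i : MvPolynomial (Fin 6) K)) = X a * X b := by
    intro a b hab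
    rw [Finset.prod_insert (by simp [hab]), Finset.prod_singleton]
  fin_cases k
  · exact h 3 4 (by decide)
  · exact h 3 5 (by decide)
  · exact h 3 2 (by decide)
  · exact h 4 5 (by decide)
  · exact h 4 1 (by decide)
  · exact h 5 0 (by decide)
  · show (∏ i ∈ ({0, 1, 2} : Finset (Fin 6)), (X i : MvPolynomial (Fin 6) K)) = X 0 * X 1 * X 2
    rw [Finset.prod_insert (by decide), h 1 2 (by decide), mul_assoc]

lemma factor_mem {I : Ideal (MvPolynomial (Fin 6) K)} {a m c : MvPolynomial (Fin 6) K}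
    (h : a ∈ I) (hc : m = c * a) : m ∈ I := hc ▸ Ideal.mul_mem_left _ c h

lemma colon_eq (I : Ideal (MvPolynomial (Fin 6) K)) (m : MvPolynomial (Fin 6) K)
    (t : Finset (Fin 6))
    (hker : I ≤ RingHom.ker (psiMap (K := K) t).toRingHom)
    (hm : psiMap (K := K) t m = m) (hm0 : m ≠ 0)
    (hback : ∀ a ∈ t, X a * m ∈ I) :
    Submodule.colon I (Ideal.span {m}) =
      Ideal.span ((fun i => (X i : MvPolynomial (Fin 6) K)) '' ↑t) := by
  apply le_antisymm
  · intro r hr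
    rw [Ideal.mem_colon_span_singleton] at hr
    rw [← ker_psiMap]
    have h0 : psiMap (K := K) t (r * m) = 0 := hker hr
    rw [map_mul, hm] at h0
    rcases mul_eq_zero.mp h0 with h | h
    · exact h
    · exact absurd h hm0
  · rw [Ideal.span_le]
    rintro _ ⟨a, ha, rfl⟩
    rw [Finset.mem_coe] at ha
    rw [SetLike.mem_coe, Ideal.mem_colon_span_singleton]
    exact hback a ha

end Aux

/-- from the proof of Lemma 2.4: In `T = K[u,v,w,x,y,z]`
(here `u = X 0, v = X 1, w = X 2, x = X 3, y = X 4, z = X 5`), the ideal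
`(xy, xz, xw, yz, yv, zu, uvw)` equals the Alexander dual of `L = (uxy, vxz, wyz)` and has
linear quotients with respect to the given order of its generators. -/
theorem dual_L_has_linearQuotients {K : Type*} [Field K]
    (g : Fin 7 → MvPolynomial (Fin 6) K)
    (hg : g = ![X 3 * X 4, X 3 * X 5, X 3 * X 2, X 4 * X 5, X 4 * X 1, X 5 * X 0,
      X 0 * X 1 * X 2]) :
    alexanderDual (Ideal.span {X 0 * X 3 * X 4, X 1 * X 3 * X 5, X 2 * X 4 * X 5} :
        Ideal (MvPolynomial (Fin 6) K)) = Ideal.span (Set.range g) ∧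
    ∀ i : Fin 7, 0 < (i : ℕ) →
      ∃ s : Set (Fin 6),
        Submodule.colon (Ideal.span (g '' {j : Fin 7 | (j : ℕ) < (i : ℕ)}))
            (Ideal.span {g i}) =
          Ideal.span ((fun i => (X i : MvPolynomial (Fin 6) K)) '' s) := by
  constructor
  · subst hg
    unfold alexanderDual
    have hset : {s : Finset (Fin 6) |
        Ideal.span ((fun i => (X i : MvPolynomial (Fin 6) K)) '' ↑s) ∈
          (Ideal.span {X 0 * X 3 * X 4, X 1 * X 3 * X 5, X 2 * X 4 * X 5} :
            Ideal (MvPolynomial (Fin 6) K)).minimalPrimes} = Set.range covS := by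
      ext s
      rw [Set.mem_setOf_eq, mem_minimalPrimes_iff]
      exact ⟨fun ⟨k, h⟩ => ⟨k, h.symm⟩, fun ⟨k, h⟩ => ⟨k, h.symm⟩⟩
    rw [hset, ← Set.range_comp]
    have hcomp : ((fun s : Finset (Fin 6) => ∏ i ∈ s, (X i : MvPolynomial (Fin 6) K)) ∘ covS) =
        ![X 3 * X 4, X 3 * X 5, X 3 * X 2, X 4 * X 5, X 4 * X 1, X 5 * X 0, X 0 * X 1 * X 2] :=
      funext fun k => prod_covS k
    rw [hcomp]
  · subst hg
    intro i hi
    fin_cases i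
    · exact absurd hi (by decide)
    · refine ⟨(↑({4} : Finset (Fin 6)) : Set (Fin 6)), colon_eq _ _ _ ?_ ?_ ?_ ?_⟩
      · rw [Ideal.span_le]
        rintro _ ⟨j, hj, rfl⟩
        rw [Set.mem_setOf_eq] at hj
        fin_cases j
        · rw [SetLike.mem_coe, RingHom.mem_ker]
          show psiMap (K := K) ({4} : Finset (Fin 6)) (X 3 * X 4) = 0
          simp +decide [psiMap]
        all_goals exact absurd hj (by decide)
      · show psiMap (K := K) ({4} : Finset (Fin 6)) (X 3 * X 5) = (X 3 * X 5 : MvPolynomial (Fin 6) K)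
        simp +decide [psiMap]
      · show (X 3 * X 5 : MvPolynomial (Fin 6) K) ≠ 0
        exact mul_ne_zero (X_ne_zero _) (X_ne_zero _)
      · intro a ha
        fin_cases ha
        · have h0 : (X 3 * X 4 : MvPolynomial (Fin 6) K) ∈ Ideal.span
              ((![X 3 * X 4, X 3 * X 5, X 3 * X 2, X 4 * X 5, X 4 * X 1, X 5 * X 0,
      X 0 * X 1 * X 2] : Fin 7 → MvPolynomial (Fin 6) K) '' {j : Fin 7 | (j : ℕ) < 1}) :=
            Ideal.subset_span ⟨0, (by decide : ((0 : Fin 7) : ℕ) < 1), rfl⟩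
          exact factor_mem h0 (show (X 4 * (X 3 * X 5) : MvPolynomial (Fin 6) K) = (X 5) * (X 3 * X 4) by ring)
    · refine ⟨(↑({4, 5} : Finset (Fin 6)) : Set (Fin 6)), colon_eq _ _ _ ?_ ?_ ?_ ?_⟩
      · rw [Ideal.span_le]
        rintro _ ⟨j, hj, rfl⟩
        rw [Set.mem_setOf_eq] at hj
        fin_cases j
        · rw [SetLike.mem_coe, RingHom.mem_ker]
          show psiMap (K := K) ({4, 5} : Finset (Fin 6)) (X 3 * X 4) = 0
          simp +decide [psiMap]
        · rw [SetLike.mem_coe, RingHom.mem_ker]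
          show psiMap (K := K) ({4, 5} : Finset (Fin 6)) (X 3 * X 5) = 0
          simp +decide [psiMap]
        all_goals exact absurd hj (by decide)
      · show psiMap (K := K) ({4, 5} : Finset (Fin 6)) (X 3 * X 2) = (X 3 * X 2 : MvPolynomial (Fin 6) K)
        simp +decide [psiMap]
      · show (X 3 * X 2 : MvPolynomial (Fin 6) K) ≠ 0
        exact mul_ne_zero (X_ne_zero _) (X_ne_zero _)
      · intro a ha
        fin_cases ha
        · have h0 : (X 3 * X 4 : MvPolynomial (Fin 6) K) ∈ Ideal.span
              ((![X 3 * X 4, X 3 * X 5, X 3 * X 2, X 4 * X 5, X 4 * X 1, X 5 * X 0,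
      X 0 * X 1 * X 2] : Fin 7 → MvPolynomial (Fin 6) K) '' {j : Fin 7 | (j : ℕ) < 2}) :=
            Ideal.subset_span ⟨0, (by decide : ((0 : Fin 7) : ℕ) < 2), rfl⟩
          exact factor_mem h0 (show (X 4 * (X 3 * X 2) : MvPolynomial (Fin 6) K) = (X 2) * (X 3 * X 4) by ring)
        · have h0 : (X 3 * X 5 : MvPolynomial (Fin 6) K) ∈ Ideal.span
              ((![X 3 * X 4, X 3 * X 5, X 3 * X 2, X 4 * X 5, X 4 * X 1, X 5 * X 0,
      X 0 * X 1 * X 2] : Fin 7 → MvPolynomial (Fin 6) K) '' {j : Fin 7 | (j : ℕ) < 2}) :=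
            Ideal.subset_span ⟨1, (by decide : ((1 : Fin 7) : ℕ) < 2), rfl⟩
          exact factor_mem h0 (show (X 5 * (X 3 * X 2) : MvPolynomial (Fin 6) K) = (X 2) * (X 3 * X 5) by ring)
    · refine ⟨(↑({3} : Finset (Fin 6)) : Set (Fin 6)), colon_eq _ _ _ ?_ ?_ ?_ ?_⟩
      · rw [Ideal.span_le]
        rintro _ ⟨j, hj, rfl⟩
        rw [Set.mem_setOf_eq] at hj
        fin_cases j
        · rw [SetLike.mem_coe, RingHom.mem_ker]
          show psiMap (K := K) ({3} : Finset (Fin 6)) (X 3 * X 4) = 0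
          simp +decide [psiMap]
        · rw [SetLike.mem_coe, RingHom.mem_ker]
          show psiMap (K := K) ({3} : Finset (Fin 6)) (X 3 * X 5) = 0
          simp +decide [psiMap]
        · rw [SetLike.mem_coe, RingHom.mem_ker]
          show psiMap (K := K) ({3} : Finset (Fin 6)) (X 3 * X 2) = 0
          simp +decide [psiMap]
        all_goals exact absurd hj (by decide)
      · show psiMap (K := K) ({3} : Finset (Fin 6)) (X 4 * X 5) = (X 4 * X 5 : MvPolynomial (Fin 6) K)
        simp +decide [psiMap]
      · show (X 4 * X 5 : MvPolynomial (Fin 6) K) ≠ 0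
        exact mul_ne_zero (X_ne_zero _) (X_ne_zero _)
      · intro a ha
        fin_cases ha
        · have h0 : (X 3 * X 4 : MvPolynomial (Fin 6) K) ∈ Ideal.span
              ((![X 3 * X 4, X 3 * X 5, X 3 * X 2, X 4 * X 5, X 4 * X 1, X 5 * X 0,
      X 0 * X 1 * X 2] : Fin 7 → MvPolynomial (Fin 6) K) '' {j : Fin 7 | (j : ℕ) < 3}) :=
            Ideal.subset_span ⟨0, (by decide : ((0 : Fin 7) : ℕ) < 3), rfl⟩
          exact factor_mem h0 (show (X 3 * (X 4 * X 5) : MvPolynomial (Fin 6) K) = (X 5) * (X 3 * X 4) by ring)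
    · refine ⟨(↑({3, 5} : Finset (Fin 6)) : Set (Fin 6)), colon_eq _ _ _ ?_ ?_ ?_ ?_⟩
      · rw [Ideal.span_le]
        rintro _ ⟨j, hj, rfl⟩
        rw [Set.mem_setOf_eq] at hj
        fin_cases j
        · rw [SetLike.mem_coe, RingHom.mem_ker]
          show psiMap (K := K) ({3, 5} : Finset (Fin 6)) (X 3 * X 4) = 0
          simp +decide [psiMap]
        · rw [SetLike.mem_coe, RingHom.mem_ker]
          show psiMap (K := K) ({3, 5} : Finset (Fin 6)) (X 3 * X 5) = 0
          simp +decide [psiMap]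
        · rw [SetLike.mem_coe, RingHom.mem_ker]
          show psiMap (K := K) ({3, 5} : Finset (Fin 6)) (X 3 * X 2) = 0
          simp +decide [psiMap]
        · rw [SetLike.mem_coe, RingHom.mem_ker]
          show psiMap (K := K) ({3, 5} : Finset (Fin 6)) (X 4 * X 5) = 0
          simp +decide [psiMap]
        all_goals exact absurd hj (by decide)
      · show psiMap (K := K) ({3, 5} : Finset (Fin 6)) (X 4 * X 1) = (X 4 * X 1 : MvPolynomial (Fin 6) K)
        simp +decide [psiMap]
      · show (X 4 * X 1 : MvPolynomial (Fin 6) K) ≠ 0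
        exact mul_ne_zero (X_ne_zero _) (X_ne_zero _)
      · intro a ha
        fin_cases ha
        · have h0 : (X 3 * X 4 : MvPolynomial (Fin 6) K) ∈ Ideal.span
              ((![X 3 * X 4, X 3 * X 5, X 3 * X 2, X 4 * X 5, X 4 * X 1, X 5 * X 0,
      X 0 * X 1 * X 2] : Fin 7 → MvPolynomial (Fin 6) K) '' {j : Fin 7 | (j : ℕ) < 4}) :=
            Ideal.subset_span ⟨0, (by decide : ((0 : Fin 7) : ℕ) < 4), rfl⟩
          exact factor_mem h0 (show (X 3 * (X 4 * X 1) : MvPolynomial (Fin 6) K) = (X 1) * (X 3 * X 4) by ring)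
        · have h0 : (X 4 * X 5 : MvPolynomial (Fin 6) K) ∈ Ideal.span
              ((![X 3 * X 4, X 3 * X 5, X 3 * X 2, X 4 * X 5, X 4 * X 1, X 5 * X 0,
      X 0 * X 1 * X 2] : Fin 7 → MvPolynomial (Fin 6) K) '' {j : Fin 7 | (j : ℕ) < 4}) :=
            Ideal.subset_span ⟨3, (by decide : ((3 : Fin 7) : ℕ) < 4), rfl⟩
          exact factor_mem h0 (show (X 5 * (X 4 * X 1) : MvPolynomial (Fin 6) K) = (X 1) * (X 4 * X 5) by ring)
    · refine ⟨(↑({3, 4} : Finset (Fin 6)) : Set (Fin 6)), colon_eq _ _ _ ?_ ?_ ?_ ?_⟩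
      · rw [Ideal.span_le]
        rintro _ ⟨j, hj, rfl⟩
        rw [Set.mem_setOf_eq] at hj
        fin_cases j
        · rw [SetLike.mem_coe, RingHom.mem_ker]
          show psiMap (K := K) ({3, 4} : Finset (Fin 6)) (X 3 * X 4) = 0
          simp +decide [psiMap]
        · rw [SetLike.mem_coe, RingHom.mem_ker]
          show psiMap (K := K) ({3, 4} : Finset (Fin 6)) (X 3 * X 5) = 0
          simp +decide [psiMap]
        · rw [SetLike.mem_coe, RingHom.mem_ker]
          show psiMap (K := K) ({3, 4} : Finset (Fin 6)) (X 3 * X 2) = 0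
          simp +decide [psiMap]
        · rw [SetLike.mem_coe, RingHom.mem_ker]
          show psiMap (K := K) ({3, 4} : Finset (Fin 6)) (X 4 * X 5) = 0
          simp +decide [psiMap]
        · rw [SetLike.mem_coe, RingHom.mem_ker]
          show psiMap (K := K) ({3, 4} : Finset (Fin 6)) (X 4 * X 1) = 0
          simp +decide [psiMap]
        all_goals exact absurd hj (by decide)
      · show psiMap (K := K) ({3, 4} : Finset (Fin 6)) (X 5 * X 0) = (X 5 * X 0 : MvPolynomial (Fin 6) K)
        simp +decide [psiMap]
      · show (X 5 * X 0 : MvPolynomial (Fin 6) K) ≠ 0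
        exact mul_ne_zero (X_ne_zero _) (X_ne_zero _)
      · intro a ha
        fin_cases ha
        · have h0 : (X 3 * X 5 : MvPolynomial (Fin 6) K) ∈ Ideal.span
              ((![X 3 * X 4, X 3 * X 5, X 3 * X 2, X 4 * X 5, X 4 * X 1, X 5 * X 0,
      X 0 * X 1 * X 2] : Fin 7 → MvPolynomial (Fin 6) K) '' {j : Fin 7 | (j : ℕ) < 5}) :=
            Ideal.subset_span ⟨1, (by decide : ((1 : Fin 7) : ℕ) < 5), rfl⟩
          exact factor_mem h0 (show (X 3 * (X 5 * X 0) : MvPolynomial (Fin 6) K) = (X 0) * (X 3 * X 5) by ring)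
        · have h0 : (X 4 * X 5 : MvPolynomial (Fin 6) K) ∈ Ideal.span
              ((![X 3 * X 4, X 3 * X 5, X 3 * X 2, X 4 * X 5, X 4 * X 1, X 5 * X 0,
      X 0 * X 1 * X 2] : Fin 7 → MvPolynomial (Fin 6) K) '' {j : Fin 7 | (j : ℕ) < 5}) :=
            Ideal.subset_span ⟨3, (by decide : ((3 : Fin 7) : ℕ) < 5), rfl⟩
          exact factor_mem h0 (show (X 4 * (X 5 * X 0) : MvPolynomial (Fin 6) K) = (X 0) * (X 4 * X 5) by ring)
    · refine ⟨(↑({3, 4, 5} : Finset (Fin 6)) : Set (Fin 6)), colon_eq _ _ _ ?_ ?_ ?_ ?_⟩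
      · rw [Ideal.span_le]
        rintro _ ⟨j, hj, rfl⟩
        rw [Set.mem_setOf_eq] at hj
        fin_cases j
        · rw [SetLike.mem_coe, RingHom.mem_ker]
          show psiMap (K := K) ({3, 4, 5} : Finset (Fin 6)) (X 3 * X 4) = 0
          simp +decide [psiMap]
        · rw [SetLike.mem_coe, RingHom.mem_ker]
          show psiMap (K := K) ({3, 4, 5} : Finset (Fin 6)) (X 3 * X 5) = 0
          simp +decide [psiMap]
        · rw [SetLike.mem_coe, RingHom.mem_ker]
          show psiMap (K := K) ({3, 4, 5} : Finset (Fin 6)) (X 3 * X 2) = 0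
          simp +decide [psiMap]
        · rw [SetLike.mem_coe, RingHom.mem_ker]
          show psiMap (K := K) ({3, 4, 5} : Finset (Fin 6)) (X 4 * X 5) = 0
          simp +decide [psiMap]
        · rw [SetLike.mem_coe, RingHom.mem_ker]
          show psiMap (K := K) ({3, 4, 5} : Finset (Fin 6)) (X 4 * X 1) = 0
          simp +decide [psiMap]
        · rw [SetLike.mem_coe, RingHom.mem_ker]
          show psiMap (K := K) ({3, 4, 5} : Finset (Fin 6)) (X 5 * X 0) = 0
          simp +decide [psiMap]
        all_goals exact absurd hj (by decide)
      · show psiMap (K := K) ({3, 4, 5} : Finset (Fin 6)) (X 0 * X 1 * X 2) = (X 0 * X 1 * X 2 : MvPolynomial (Fin 6) K)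
        simp +decide [psiMap]
      · show (X 0 * X 1 * X 2 : MvPolynomial (Fin 6) K) ≠ 0
        exact mul_ne_zero (mul_ne_zero (X_ne_zero _) (X_ne_zero _)) (X_ne_zero _)
      · intro a ha
        fin_cases ha
        · have h0 : (X 3 * X 2 : MvPolynomial (Fin 6) K) ∈ Ideal.span
              ((![X 3 * X 4, X 3 * X 5, X 3 * X 2, X 4 * X 5, X 4 * X 1, X 5 * X 0,
      X 0 * X 1 * X 2] : Fin 7 → MvPolynomial (Fin 6) K) '' {j : Fin 7 | (j : ℕ) < 6}) :=
            Ideal.subset_span ⟨2, (by decide : ((2 : Fin 7) : ℕ) < 6), rfl⟩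
          exact factor_mem h0 (show (X 3 * (X 0 * X 1 * X 2) : MvPolynomial (Fin 6) K) = (X 0 * X 1) * (X 3 * X 2) by ring)
        · have h0 : (X 4 * X 1 : MvPolynomial (Fin 6) K) ∈ Ideal.span
              ((![X 3 * X 4, X 3 * X 5, X 3 * X 2, X 4 * X 5, X 4 * X 1, X 5 * X 0,
      X 0 * X 1 * X 2] : Fin 7 → MvPolynomial (Fin 6) K) '' {j : Fin 7 | (j : ℕ) < 6}) :=
            Ideal.subset_span ⟨4, (by decide : ((4 : Fin 7) : ℕ) < 6), rfl⟩
          exact factor_mem h0 (show (X 4 * (X 0 * X 1 * X 2) : MvPolynomial (Fin 6) K) = (X 0 * X 2) * (X 4 * X 1) by ring)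
        · have h0 : (X 5 * X 0 : MvPolynomial (Fin 6) K) ∈ Ideal.span
              ((![X 3 * X 4, X 3 * X 5, X 3 * X 2, X 4 * X 5, X 4 * X 1, X 5 * X 0,
      X 0 * X 1 * X 2] : Fin 7 → MvPolynomial (Fin 6) K) '' {j : Fin 7 | (j : ℕ) < 6}) :=
            Ideal.subset_span ⟨5, (by decide : ((5 : Fin 7) : ℕ) < 6), rfl⟩
          exact factor_mem h0 (show (X 5 * (X 0 * X 1 * X 2) : MvPolynomial (Fin 6) K) = (X 1 * X 2) * (X 5 * X 0) by ring)
end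

section
/- Let K be a field. Then K[x,y]/(x², xy) is not clean, although (x², xy) is an almost complete intersection monomial ideal of K[x,y]. -/
open MvPolynomial

variable {K : Type*} [Field K] {σ : Type*}

abbrev SS (K : Type*) [Field K] := MvPolynomial (Fin 2) K

noncomputable def d1 : Fin 2 →₀ ℕ := Finsupp.single 0 2
noncomputable def d2 : Fin 2 →₀ ℕ := Finsupp.single 0 1 + Finsupp.single 1 1

lemma aux1 : (Ideal.span {X 0 ^ 2, X 0 * X 1} : Ideal (SS K)) =
    Ideal.span ((fun d => (monomial d (1 : K))) '' {d1, d2}) := by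
  congr 1
  rw [Set.image_insert_eq, Set.image_singleton]
  rw [X_pow_eq_monomial]
  rw [show (X 0 * X 1 : SS K) = monomial d2 1 from ?_]
  · rfl
  · show (monomial (Finsupp.single 0 1) 1 * monomial (Finsupp.single 1 1) 1 : SS K) = _
    rw [monomial_mul, one_mul]; rfl

lemma mem_mono (d : Fin 2 →₀ ℕ) :
    monomial d (1 : K) ∈ (Ideal.span {X 0 ^ 2, X 0 * X 1} : Ideal (SS K)) ↔
      d1 ≤ d ∨ d2 ≤ d := by
  rw [aux1, mem_ideal_span_monomial_image]
  simp [support_monomial]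

lemma hX0_not : (X 0 : SS K) ∉ (Ideal.span {X 0 ^ 2, X 0 * X 1} : Ideal (SS K)) := by
  intro hmem
  rcases (mem_mono (Finsupp.single 0 1)).mp hmem with h | h
  · have := h 0
    simp [d1, Finsupp.single_apply] at this
  · have := h 1
    simp [d2, Finsupp.single_apply] at this


lemma primeX0 : Prime (X 0 : SS K) := by
  refine (MulEquiv.prime_iff (MvPolynomial.finSuccEquiv K 1).toRingEquiv.toMulEquiv).mp ?_
  have h : (MvPolynomial.finSuccEquiv K 1).toRingEquiv.toMulEquiv (X 0 : SS K)
      = (Polynomial.X : Polynomial (MvPolynomial (Fin 1) K)) := finSuccEquiv_X_zero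
  rw [h]
  exact Polynomial.prime_X

lemma notdvd : ¬ (X 0 : SS K) ∣ X 1 := by
  rintro ⟨c, hc⟩
  have := congrArg (eval (fun i : Fin 2 => if i = 1 then (1 : K) else 0)) hc
  simp at this

lemma p0prime : (Ideal.span {(X 0 : SS K)}).IsPrime :=
  (Ideal.span_singleton_prime (X_ne_zero 0)).mpr primeX0

lemma hIle : (Ideal.span {X 0 ^ 2, X 0 * X 1} : Ideal (SS K)) ≤ Ideal.span {X 0} := by
  rw [Ideal.span_le]
  rintro f (rfl | rfl)
  · exact Ideal.mem_span_singleton.mpr ⟨X 0, sq (X 0)⟩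
  · exact Ideal.mem_span_singleton.mpr ⟨X 1, rfl⟩

lemma reg_quot (g : SS K) (h : X 1 * g ∈ Ideal.span {(X 0 : SS K)}) :
    g ∈ Ideal.span {(X 0 : SS K)} := by
  rw [Ideal.mem_span_singleton] at h ⊢
  exact ((primeX0.2.2 _ _ h).resolve_left notdvd)

lemma min_primes (p : Ideal (SS K))
    (hp : p ∈ (Ideal.span {X 0 ^ 2, X 0 * X 1} : Ideal (SS K)).minimalPrimes) :
    p = Ideal.span {X 0} := by
  obtain ⟨⟨hprime, hle⟩, hmin⟩ := hp
  have hx : (X 0 : SS K) ∈ p :=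
    hprime.mem_of_pow_mem 2 (hle (Ideal.subset_span (Set.mem_insert _ _)))
  have h1 : Ideal.span {(X 0 : SS K)} ≤ p := by
    rwa [Ideal.span_singleton_le_iff_mem]
  exact le_antisymm (hmin ⟨p0prime, hIle⟩ h1) h1

lemma sub_p0_bot (q : Ideal (SS K)) [q.IsPrime] (hlt : q < Ideal.span {(X 0 : SS K)}) :
    q = ⊥ := by
  rw [eq_bot_iff]
  intro f hf
  by_contra hf0
  have hf0' : f ≠ 0 := fun h => hf0 (h ▸ Submodule.zero_mem _)
  obtain ⟨n, g, hndvd, rfl⟩ := WfDvdMonoid.max_power_factor hf0' primeX0.irreducible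
  rcases (‹q.IsPrime›.mul_mem_iff_mem_or_mem.mp hf) with h | h
  · have hx : (X 0 : SS K) ∈ q := ‹q.IsPrime›.mem_of_pow_mem n h
    exact absurd ((Ideal.span_singleton_le_iff_mem _).mpr hx) (not_le_of_gt hlt)
  · exact hndvd (Ideal.mem_span_singleton.mp (hlt.le h))

open Order in
lemma height_p0 :
    Order.height (⟨Ideal.span {(X 0 : SS K)}, p0prime⟩ : PrimeSpectrum (SS K)) = 1 := by
  set Q0 : PrimeSpectrum (SS K) := ⟨⊥, Ideal.bot_prime⟩ with hQ0
  set P0 : PrimeSpectrum (SS K) := ⟨Ideal.span {(X 0 : SS K)}, p0prime⟩ with hP0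
  have hlow : ∀ y : PrimeSpectrum (SS K), y < P0 → y = Q0 := by
    intro y hy
    have : y.asIdeal < P0.asIdeal := hy
    have := sub_p0_bot (K := K) y.asIdeal this
    exact PrimeSpectrum.ext this
  have hQ0min : IsMin Q0 := by
    intro y hy
    have : y.asIdeal ≤ (⊥ : Ideal (SS K)) := hy
    have : y.asIdeal = ⊥ := le_bot_iff.mp this
    exact le_of_eq (PrimeSpectrum.ext this).symm
  have hQ0lt : Q0 < P0 := by
    refine lt_of_le_of_ne (by exact bot_le : Q0.asIdeal ≤ P0.asIdeal) ?_
    intro h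
    have : (X 0 : SS K) ∈ Q0.asIdeal := h ▸ Ideal.mem_span_singleton_self _
    exact X_ne_zero 0 (Submodule.mem_bot _ |>.mp this)
  refine le_antisymm ?_ ?_
  · rw [show (1 : ℕ∞) = ((1 : ℕ) : ℕ∞) from rfl, Order.height_le_coe_iff]
    intro y hy
    rw [hlow y hy, Order.height_eq_zero.mpr hQ0min]
    norm_num
  · rw [ENat.one_le_iff_ne_zero]
    intro h
    exact not_isMin_of_lt hQ0lt (Order.height_eq_zero.mp h)

lemma mem_span_pair_left : (X 0 ^ 2 : SS K) ∈ (Ideal.span {X 0 ^ 2, X 0 * X 1} : Ideal (SS K)) :=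
  Ideal.subset_span (Set.mem_insert _ _)

lemma mem_span_pair_right : (X 0 * X 1 : SS K) ∈ (Ideal.span {X 0 ^ 2, X 0 * X 1} : Ideal (SS K)) :=
  Ideal.subset_span (Set.mem_insert_of_mem _ rfl)

lemma height_eq_one :
    idealHeight (Ideal.span {X 0 ^ 2, X 0 * X 1} : Ideal (SS K)) = 1 := by
  unfold idealHeight
  refine le_antisymm (sInf_le ⟨⟨Ideal.span {X 0}, p0prime⟩, hIle, height_p0.symm⟩) ?_
  refine le_sInf ?_
  rintro h ⟨p, hIp, rfl⟩
  rw [ENat.one_le_iff_ne_zero]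
  intro h0
  have hmin := Order.height_eq_zero.mp h0
  have hQ0lt : (⟨⊥, Ideal.bot_prime⟩ : PrimeSpectrum (SS K)) < p := by
    refine lt_of_le_of_ne (by exact bot_le : (⊥ : Ideal (SS K)) ≤ p.asIdeal) ?_
    intro hb
    have hx2 : (X 0 ^ 2 : SS K) ∈ p.asIdeal := hIp mem_span_pair_left
    rw [← hb] at hx2
    exact pow_ne_zero 2 (X_ne_zero 0) ((Submodule.mem_bot _).mp hx2)
  exact not_isMin_of_lt hQ0lt hmin

lemma min_gens :
    minimalMonomialGens (Ideal.span {X 0 ^ 2, X 0 * X 1} : Ideal (SS K)) =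
      {monomial d1 (1 : K), monomial d2 (1 : K)} := by
  ext f
  constructor
  · rintro ⟨d, rfl, hd, hmin⟩
    rcases (mem_mono d).mp hd with h | h
    · left
      rcases eq_or_lt_of_le h with rfl | hlt
      · rfl
      · exact absurd ((mem_mono d1).mpr (Or.inl le_rfl)) (hmin d1 hlt)
    · right
      rcases eq_or_lt_of_le h with rfl | hlt
      · rfl
      · exact absurd ((mem_mono d2).mpr (Or.inr le_rfl)) (hmin d2 hlt)
  · rintro (rfl | rfl)
    · refine ⟨d1, rfl, (mem_mono d1).mpr (Or.inl le_rfl), ?_⟩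
      intro e he hmem
      rcases (mem_mono e).mp hmem with h | h
      · exact absurd (le_antisymm h he.le) he.ne'
      · have h1 := h 1
        have h2 := he.le 1
        simp [d1, d2, Finsupp.single_apply] at h1 h2
        omega
    · refine ⟨d2, rfl, (mem_mono d2).mpr (Or.inr le_rfl), ?_⟩
      intro e he hmem
      rcases (mem_mono e).mp hmem with h | h
      · have h1 := h 0
        have h2 := he.le 0
        simp [d1, d2, Finsupp.single_apply] at h1 h2
        omega
      · exact absurd (le_antisymm h he.le) he.ne'

lemma d1_ne_d2 : (d1 : Fin 2 →₀ ℕ) ≠ d2 := by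
  intro h
  have := DFunLike.congr_fun h 1
  simp [d1, d2, Finsupp.single_apply] at this

lemma mu_eq_two : mu (Ideal.span {X 0 ^ 2, X 0 * X 1} : Ideal (SS K)) = 2 := by
  rw [mu, min_gens, Set.ncard_pair]
  intro h
  have := congrArg (coeff d1) h
  simp [coeff_monomial, d1_ne_d2.symm] at this

lemma not_clean :
    ¬ IsClean (Ideal.span {X 0 ^ 2, X 0 * X 1} : Ideal (MvPolynomial (Fin 2) K)) := by
  rintro ⟨r, F, p, hmonF, hF0, hFtop, hlt, hstep⟩
  have key : ∀ j : Fin (r + 1), ∀ f : SS K, X 1 * f ∈ F j → f ∈ F j := by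
    refine Fin.reverseInduction ?_ ?_
    · intro f _
      rw [hFtop]
      exact Submodule.mem_top
    · intro i ih f hf
      have hfs : f ∈ F i.succ := ih f ((hlt i).le hf)
      obtain ⟨hpmon, hpmin, ⟨e⟩⟩ := hstep i
      have hpi : p i = Ideal.span {(X 0 : SS K)} := min_primes _ hpmin
      rw [hpi] at e
      set m : (↥(F i.succ) ⧸ (Submodule.comap (F i.succ).subtype (F i.castSucc))) :=
        Submodule.Quotient.mk ⟨f, hfs⟩ with hm
      have hsm : (X 1 : SS K) • m = 0 := by
        rw [hm, ← Submodule.Quotient.mk_smul, Submodule.Quotient.mk_eq_zero]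
        exact hf
      have hem : (X 1 : SS K) • e m = 0 := by
        rw [← LinearEquiv.map_smul, hsm, LinearEquiv.map_zero]
      obtain ⟨g, hg⟩ := Submodule.Quotient.mk_surjective _ (e m)
      rw [← hg, ← Submodule.Quotient.mk_smul, Submodule.Quotient.mk_eq_zero] at hem
      have hgmem : g ∈ Ideal.span {(X 0 : SS K)} := reg_quot g hem
      have : e m = 0 := by
        rw [← hg, Submodule.Quotient.mk_eq_zero]
        exact hgmem
      have hm0 : m = 0 := by
        have := e.map_eq_zero_iff.mp this
        exact this
      rw [hm, Submodule.Quotient.mk_eq_zero] at hm0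
      exact hm0
  have hx : (X 0 : SS K) ∈ F 0 := by
    apply key 0
    rw [hF0]
    have : (X 1 * X 0 : SS K) = X 0 * X 1 := mul_comm _ _
    rw [this]
    exact mem_span_pair_right
  rw [hF0] at hx
  exact hX0_not hx

/-- remark after Theorem 2.5: `K[x,y]/(x², xy)` is not clean, although
`(x², xy)` is an almost complete intersection monomial ideal (`μ(I) = ht I + 1`). -/
theorem not_clean_x_sq_xy {K : Type*} [Field K] :
    ¬ IsClean (Ideal.span {X 0 ^ 2, X 0 * X 1} : Ideal (MvPolynomial (Fin 2) K)) ∧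
    IsMonomialIdeal (Ideal.span {X 0 ^ 2, X 0 * X 1} : Ideal (MvPolynomial (Fin 2) K)) ∧
    (mu (Ideal.span {X 0 ^ 2, X 0 * X 1} : Ideal (MvPolynomial (Fin 2) K)) : ℕ∞) =
      idealHeight (Ideal.span {X 0 ^ 2, X 0 * X 1} : Ideal (MvPolynomial (Fin 2) K)) + 1 := by
  refine ⟨not_clean, ⟨{d1, d2}, aux1⟩, ?_⟩
  rw [mu_eq_two, height_eq_one]
  rfl
end
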